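/- arXiv:2602.01499 — 3 statements merged into one kernel-verified Lean document; each statement's English description precedes it below -/
import Mathlib

section
/- Let k ∈ ℕ, let G be the k²×k² grid and let W be the k×k grid. Then for every labeling γ: E(G) → ℤ/2ℤ, the signed graph (G,γ) contains (W,γ₀) as a subdivision (where γ₀ labels every edge 0). -/
namespace TDMPaper

/-- A finite multigraph without loops: edges carry their unordered pair of endpoints. -/
structure MGraph where
  V : Type
  E : Type
  finV : Finite V
  finE : Finite E
  ends : E → Sym2 V
  loopless : ∀ e, ¬ (ends e).IsDiag

attribute [instance] MGraph.finV MGraph.finE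

namespace MGraph

/-- A cycle in a multigraph, given by cyclically ordered distinct vertices and
distinct edges. -/
structure Cycle (G : MGraph) where
  n : ℕ
  npos : 0 < n
  vtx : Fin n → G.V
  edge : Fin n → G.E
  vtx_inj : Function.Injective vtx
  edge_inj : Function.Injective edge
  ends_eq : ∀ i : Fin n,
    G.ends (edge i) = s(vtx i, vtx ⟨(i.1 + 1) % n, Nat.mod_lt _ npos⟩)

/-- The parity of a cycle with respect to a signing `γ`. -/
def Cycle.parity {G : MGraph} (C : G.Cycle) (γ : G.E → ZMod 2) : ZMod 2 :=
  ∑ i, γ (C.edge i)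

/-- The vertex set of a cycle. -/
def Cycle.support {G : MGraph} (C : G.Cycle) : Set G.V := Set.range C.vtx

/-- The odd cycle packing number of a signed graph: the maximum number of pairwise
vertex-disjoint odd cycles. -/
noncomputable def OCP (G : MGraph) (γ : G.E → ZMod 2) : ℕ :=
  sSup {k : ℕ | ∃ C : Fin k → G.Cycle,
    (∀ i, (C i).parity γ = 1) ∧
    ∀ i j, i ≠ j → Disjoint ((C i).support) ((C j).support)}

/-- The subgraph induced by a vertex set `S` (kept on the same vertex type; only
edges with both endpoints in `S` survive). -/
def induce (G : MGraph) (S : Set G.V) : MGraph where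
  V := G.V
  E := {e : G.E // ∀ v ∈ G.ends e, v ∈ S}
  finV := G.finV
  finE := inferInstance
  ends := fun e => G.ends e.1
  loopless := fun e => G.loopless e.1

/-- The odd cycle packing number of the subgraph induced on `S`, signs inherited. -/
noncomputable def OCPOn (G : MGraph) (γ : G.E → ZMod 2) (S : Set G.V) : ℕ :=
  (G.induce S).OCP (fun e => γ e.1)

/-- A path in a multigraph. -/
structure Path (G : MGraph) where
  n : ℕ
  vtx : Fin (n + 1) → G.V
  edge : Fin n → G.E
  vtx_inj : Function.Injective vtx
  ends_eq : ∀ i : Fin n, G.ends (edge i) = s(vtx i.castSucc, vtx i.succ)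

def Path.first {G : MGraph} (P : G.Path) : G.V := P.vtx 0
def Path.last {G : MGraph} (P : G.Path) : G.V := P.vtx (Fin.last P.n)
def Path.support {G : MGraph} (P : G.Path) : Set G.V := Set.range P.vtx
def Path.internals {G : MGraph} (P : G.Path) : Set G.V :=
  P.support \ {P.first, P.last}
def Path.parity {G : MGraph} (P : G.Path) (γ : G.E → ZMod 2) : ZMod 2 :=
  ∑ i, γ (P.edge i)

end MGraph

open MGraph

/-- `γ'` is obtained from `γ` by a sequence of shiftings at vertices. -/
def IsShift (G : MGraph) (γ γ' : G.E → ZMod 2) : Prop :=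
  ∃ σ : G.V → ZMod 2, ∀ e u v, G.ends e = s(u, v) → γ' e = γ e + σ u + σ v

/-- A minor model of `H` in `G`: disjoint nonempty connected branch sets and an
injective assignment of edges. -/
structure MinorModel (H G : MGraph) where
  bs : H.V → Set G.V
  em : H.E → G.E
  bs_nonempty : ∀ v, (bs v).Nonempty
  bs_disjoint : ∀ u v, u ≠ v → Disjoint (bs u) (bs v)
  bs_connected : ∀ v, ∀ a ∈ bs v, ∀ b ∈ bs v,
    Relation.ReflTransGen
      (fun x y => x ∈ bs v ∧ y ∈ bs v ∧ ∃ e, G.ends e = s(x, y)) a b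
  em_inj : Function.Injective em
  em_ends : ∀ eH u v, H.ends eH = s(u, v) →
    ∃ a ∈ bs u, ∃ b ∈ bs v, G.ends (em eH) = s(a, b)

/-- `H` is a minor of `G`. -/
def IsMinor (H G : MGraph) : Prop := Nonempty (MinorModel H G)

/-- `(H,KH)` is a rooted minor of `(G,KG)`: there is a minor model in which the
branch set of every root of `H` contains a root of `G`. -/
def IsRootedMinor (H : MGraph) (KH : Set H.V) (G : MGraph) (KG : Set G.V) : Prop :=
  ∃ M : MinorModel H G, ∀ v ∈ KH, (M.bs v ∩ KG).Nonempty

/-- A signed minor model of `(H,γH)` in `(G,γG)`: after shifting, branch sets are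
connected through even edges and edges of `H` get edges of `G` of the correct sign. -/
structure SignedMinorModel (H G : MGraph) (γH : H.E → ZMod 2) (γG : G.E → ZMod 2) where
  γ' : G.E → ZMod 2
  shift : IsShift G γG γ'
  bs : H.V → Set G.V
  em : H.E → G.E
  bs_nonempty : ∀ v, (bs v).Nonempty
  bs_disjoint : ∀ u v, u ≠ v → Disjoint (bs u) (bs v)
  bs_connected : ∀ v, ∀ a ∈ bs v, ∀ b ∈ bs v,
    Relation.ReflTransGen
      (fun x y => x ∈ bs v ∧ y ∈ bs v ∧ ∃ e, γ' e = 0 ∧ G.ends e = s(x, y)) a b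
  em_inj : Function.Injective em
  em_ends : ∀ eH u v, H.ends eH = s(u, v) →
    ∃ a ∈ bs u, ∃ b ∈ bs v, G.ends (em eH) = s(a, b)
  em_parity : ∀ eH, γ' (em eH) = γH eH

/-- `(H,γH)` is a signed graph minor of `(G,γG)`. -/
def IsSignedMinor (H : MGraph) (γH : H.E → ZMod 2) (G : MGraph)
    (γG : G.E → ZMod 2) : Prop :=
  Nonempty (SignedMinorModel H G γH γG)

/-- `(H,γH,KH)` is a rooted signed graph minor of `(G,γG,KG)`. -/
def IsRootedSignedMinor (H : MGraph) (γH : H.E → ZMod 2) (KH : Set H.V)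
    (G : MGraph) (γG : G.E → ZMod 2) (KG : Set G.V) : Prop :=
  ∃ M : SignedMinorModel H G γH γG, ∀ v ∈ KH, (M.bs v ∩ KG).Nonempty

/-- An odd minor model of `H` in `G`: a minor model together with a 2-colouring of
`G` which is proper on each branch set (branch sets are connected through
bichromatic edges) and for which every model edge is monochromatic. -/
structure OddMinorModel (H G : MGraph) where
  bs : H.V → Set G.V
  em : H.E → G.E
  col : G.V → ZMod 2
  bs_nonempty : ∀ v, (bs v).Nonempty
  bs_disjoint : ∀ u v, u ≠ v → Disjoint (bs u) (bs v)
  bs_connected : ∀ v, ∀ a ∈ bs v, ∀ b ∈ bs v,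
    Relation.ReflTransGen
      (fun x y => x ∈ bs v ∧ y ∈ bs v ∧ col x ≠ col y ∧ ∃ e, G.ends e = s(x, y)) a b
  em_inj : Function.Injective em
  em_ends : ∀ eH u v, H.ends eH = s(u, v) →
    ∃ a ∈ bs u, ∃ b ∈ bs v, G.ends (em eH) = s(a, b)
  em_mono : ∀ eH u v, G.ends (em eH) = s(u, v) → col u = col v

/-- `G` contains `H` as an odd-minor. -/
def IsOddMinor (H G : MGraph) : Prop := Nonempty (OddMinorModel H G)

/-- `(G,γG)` contains `(H,γH)` as a subdivision. -/
def IsSignedSubdivision (H : MGraph) (γH : H.E → ZMod 2) (G : MGraph)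
    (γG : G.E → ZMod 2) : Prop :=
  ∃ (γH' : H.E → ZMod 2) (_ : IsShift H γH γH')
    (φV : H.V → G.V) (φE : H.E → G.Path),
    Function.Injective φV ∧
    (∀ eH u v, H.ends eH = s(u, v) →
      s((φE eH).first, (φE eH).last) = s(φV u, φV v)) ∧
    (∀ eH, (φE eH).parity γG = γH' eH) ∧
    (∀ e e', e ≠ e' → Disjoint ((φE e).internals) ((φE e').support)) ∧
    (∀ e, Disjoint ((φE e).internals) (Set.range φV))

/-! ## Tree decompositions and width parameters -/

/-- A tree decomposition of a multigraph. -/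
structure TreeDecomp (G : MGraph) where
  ι : Type
  tree : SimpleGraph ι
  isTree : tree.IsTree
  bag : ι → Set G.V
  covers_vertex : ∀ v, ∃ t, v ∈ bag t
  covers_edge : ∀ e, ∃ t, ∀ v ∈ G.ends e, v ∈ bag t
  bag_connected : ∀ v, (tree.induce {t | v ∈ bag t}).Connected

/-- A node of a tree is a leaf if it has at most one neighbour. -/
def IsLeaf {ι : Type} (T : SimpleGraph ι) (t : ι) : Prop :=
  (T.neighborSet t).Subsingleton

/-- A tree `K`-free-decomposition. -/
structure KFreeDecomp (G : MGraph) (K : Set G.V) extends TreeDecomp G where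
  L : Set G.V
  L_disj : Disjoint L K
  unique_bag : ∀ v ∈ L, ∃! t, v ∈ bag t
  leaf_bag : ∀ v ∈ L, ∀ t, v ∈ bag t → IsLeaf tree t

/-- The width of a tree `K`-free-decomposition: `max {0, max_t |β(t)\L| - 1}`. -/
noncomputable def KFreeDecomp.width {G : MGraph} {K : Set G.V}
    (D : KFreeDecomp G K) : ℕ :=
  ⨆ t : D.ι, ((D.bag t \ D.L).ncard - 1)

/-- The `K`-free treewidth of `(G,K)`. -/
noncomputable def twK (G : MGraph) (K : Set G.V) : ℕ :=
  sInf {w | ∃ D : KFreeDecomp G K, D.width = w}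

/-- A tame OCP-tree-decomposition of a signed graph. -/
structure TameOCPDecomp (G : MGraph) (γ : G.E → ZMod 2) extends TreeDecomp G where
  prot : ι → Set G.V
  prot_sub : ∀ t, prot t ⊆ bag t
  prot_adh : ∀ t t', tree.Adj t t' → ((bag t ∩ bag t') \ prot t).ncard ≤ 1

/-- The tame width (t-width) of a tame OCP-tree-decomposition. -/
noncomputable def TameOCPDecomp.twidth {G : MGraph} {γ : G.E → ZMod 2}
    (D : TameOCPDecomp G γ) : ℕ :=
  ⨆ t : D.ι, ((D.prot t).ncard + G.OCPOn γ (D.bag t \ D.prot t))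

/-- The tame OCP-treewidth of a signed graph. -/
noncomputable def tOCPtw (G : MGraph) (γ : G.E → ZMod 2) : ℕ :=
  sInf {w | ∃ D : TameOCPDecomp G γ, D.twidth = w}

/-- A TDM-tree-decomposition of a rooted signed graph. -/
structure TDMDecomp (G : MGraph) (γ : G.E → ZMod 2) (K : Set G.V)
    extends TreeDecomp G where
  prot : ι → Set G.V
  J : Set ι
  J_subtree : J.Nonempty → (tree.induce J).Connected
  prot_sub : ∀ t, prot t ⊆ bag t
  prot_roots : ∀ t, K ∩ bag t ⊆ prot t
  prot_adh : ∀ t t', tree.Adj t t' → ((bag t ∩ bag t') \ prot t).ncard ≤ 1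
  strong : ∀ t ∈ J, ∀ t', tree.Adj t t' → bag t ∩ bag t' ⊆ prot t
  roots_in_J : K ⊆ ⋃ j ∈ J, bag j

/-- The width of a TDM-tree-decomposition. -/
noncomputable def TDMDecomp.width {G : MGraph} {γ : G.E → ZMod 2} {K : Set G.V}
    (D : TDMDecomp G γ K) : ℕ :=
  ⨆ t : D.ι, ((D.prot t).ncard + G.OCPOn γ (D.bag t \ D.prot t))

/-- The TDM-treewidth of a rooted signed graph. -/
noncomputable def TDMtw (G : MGraph) (γ : G.E → ZMod 2) (K : Set G.V) : ℕ :=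
  sInf {w | ∃ D : TDMDecomp G γ K, D.width = w}

/-! ## Grids, parity handles, parity vortices -/

/-- Adjacency of the grid, on `ℕ × ℕ` coordinates. -/
def gridAdj (a b : ℕ × ℕ) : Prop :=
  (a.1 = b.1 ∧ (a.2 + 1 = b.2 ∨ b.2 + 1 = a.2)) ∨
  (a.2 = b.2 ∧ (a.1 + 1 = b.1 ∨ b.1 + 1 = a.1))

/-- The `k × k` grid. -/
def gridGraph (k : ℕ) : MGraph where
  V := Fin k × Fin k
  E := {e : Sym2 (Fin k × Fin k) //
    ∃ a b : Fin k × Fin k, gridAdj (a.1.1, a.2.1) (b.1.1, b.2.1) ∧ e = s(a, b)}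
  finV := inferInstance
  finE := inferInstance
  ends := Subtype.val
  loopless := fun e he => by
    obtain ⟨a, b, hab, h⟩ := e.2
    rw [h, Sym2.mk_isDiag_iff] at he
    subst he
    rcases hab with ⟨_, h' | h'⟩ | ⟨_, h' | h'⟩ <;> omega

/-- The first row of the `k × k` grid. -/
def firstRow (k : ℕ) : Set (gridGraph k).V := {p : Fin k × Fin k | p.1.1 = 0}

/-- The `i`-th designated vertex `x_i` on the outer face of the cylindrical
`(k × 4k)`-grid (every other vertex, `0`-indexed). -/
def xvtx (k : ℕ) (i : Fin (2 * k)) : Fin k × Fin (4 * k) :=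
  (⟨0, by have := i.2; omega⟩, ⟨2 * i.1, by have := i.2; omega⟩)

/-- Adjacency of the cylindrical `(k × 4k)`-grid `P_k □ C_{4k}`. -/
def cylAdj (k : ℕ) (a b : Fin k × Fin (4 * k)) : Prop :=
  (a.1 = b.1 ∧ (a.2.1 + 1 = b.2.1 ∨ b.2.1 + 1 = a.2.1 ∨
    (a.2.1 = 0 ∧ b.2.1 + 1 = 4 * k) ∨ (b.2.1 = 0 ∧ a.2.1 + 1 = 4 * k))) ∨
  (a.2 = b.2 ∧ (a.1.1 + 1 = b.1.1 ∨ b.1.1 + 1 = a.1.1))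

/-- The chords `x_i x_{2k-i+1}` of the parity handle. -/
def handleChord (k : ℕ) (e : Sym2 (Fin k × Fin (4 * k))) : Prop :=
  ∃ i : Fin k, e = s(xvtx k ⟨i.1, by have := i.2; omega⟩,
    xvtx k ⟨2 * k - 1 - i.1, by have := i.2; omega⟩)

/-- The chords `x_{2i-1} x_{2i}` of the parity vortex. -/
def vortexChord (k : ℕ) (e : Sym2 (Fin k × Fin (4 * k))) : Prop :=
  ∃ i : Fin k, e = s(xvtx k ⟨2 * i.1, by have := i.2; omega⟩,
    xvtx k ⟨2 * i.1 + 1, by have := i.2; omega⟩)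

lemma xvtx_ne (k : ℕ) (i j : Fin (2 * k)) (h : i.1 ≠ j.1) : xvtx k i ≠ xvtx k j := by
  intro hc
  have := congrArg (fun p => p.2.1) hc
  simp only [xvtx] at this
  omega

/-- The unsigned, unrooted parity handle `H_k`. -/
def handleGraph (k : ℕ) : MGraph where
  V := Fin k × Fin (4 * k)
  E := {e : Sym2 (Fin k × Fin (4 * k)) //
    (∃ a b, cylAdj k a b ∧ e = s(a, b)) ∨ handleChord k e}
  finV := inferInstance
  finE := inferInstance
  ends := Subtype.val
  loopless := fun e he => by
    rcases e.2 with ⟨a, b, hab, h⟩ | ⟨i, h⟩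
    · rw [h, Sym2.mk_isDiag_iff] at he
      subst he
      have h1 := a.1.2
      have h2 := a.2.2
      rcases hab with ⟨_, h' | h' | ⟨h', h''⟩ | ⟨h', h''⟩⟩ | ⟨_, h' | h'⟩ <;> omega
    · rw [h, Sym2.mk_isDiag_iff] at he
      have := i.2
      exact xvtx_ne k _ _ (show (i.1 : ℕ) ≠ 2 * k - 1 - i.1 by omega) he

/-- The unsigned, unrooted parity vortex `V_k`. -/
def vortexGraph (k : ℕ) : MGraph where
  V := Fin k × Fin (4 * k)
  E := {e : Sym2 (Fin k × Fin (4 * k)) //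
    (∃ a b, cylAdj k a b ∧ e = s(a, b)) ∨ vortexChord k e}
  finV := inferInstance
  finE := inferInstance
  ends := Subtype.val
  loopless := fun e he => by
    rcases e.2 with ⟨a, b, hab, h⟩ | ⟨i, h⟩
    · rw [h, Sym2.mk_isDiag_iff] at he
      subst he
      have h1 := a.1.2
      have h2 := a.2.2
      rcases hab with ⟨_, h' | h' | ⟨h', h''⟩ | ⟨h', h''⟩⟩ | ⟨_, h' | h'⟩ <;> omega
    · rw [h, Sym2.mk_isDiag_iff] at he
      have := i.2
      exact xvtx_ne k _ _ (show (2 * i.1 : ℕ) ≠ 2 * i.1 + 1 by omega) he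

/-- The all-zero signing. -/
def γ₀ (G : MGraph) : G.E → ZMod 2 := fun _ => 0

/-- The all-one signing. -/
def γ₁ (G : MGraph) : G.E → ZMod 2 := fun _ => 1

/-! ## Matrices with two nonzero entries per row -/

/-- `A` has exactly two nonzero entries in every row. -/
def TwoNonzeroPerRow {m n : ℕ} (A : Matrix (Fin m) (Fin n) ℤ) : Prop :=
  ∀ i, {j | A i j ≠ 0}.ncard = 2

/-- The graph `G(A)` of a matrix with exactly two nonzero entries per row:
vertices are columns, edges are rows, each row joining its two nonzero columns. -/
noncomputable def matrixGraph {m n : ℕ} (A : Matrix (Fin m) (Fin n) ℤ)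
    (h : TwoNonzeroPerRow A) : MGraph where
  V := Fin n
  E := Fin m
  finV := inferInstance
  finE := inferInstance
  ends := fun i => s((Set.ncard_eq_two.mp (h i)).choose,
    (Set.ncard_eq_two.mp (h i)).choose_spec.choose)
  loopless := fun i hi => by
    rw [Sym2.mk_isDiag_iff] at hi
    exact (Set.ncard_eq_two.mp (h i)).choose_spec.choose_spec.1 hi

/-- The signing of `G(A)`: a row is even iff its two nonzero entries have
different signs (i.e. the product of its nonzero entries is negative). -/
def matrixSign {m n : ℕ} (A : Matrix (Fin m) (Fin n) ℤ) : Fin m → ZMod 2 :=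
  fun i => if (∏ j ∈ Finset.univ.filter (fun j => A i j ≠ 0), A i j) < 0 then 0 else 1

/-- The roots of `G⁺_•(A)`: columns containing an entry outside `{-1,0,1}`. -/
def matrixRoots {m n : ℕ} (A : Matrix (Fin m) (Fin n) ℤ) : Set (Fin n) :=
  {j | ∃ i, 1 < (A i j).natAbs}

/-- The TDM-treewidth of the rooted signed graph `G⁺_•(A)` associated to `A`. -/
noncomputable def matrixTDMtw {m n : ℕ} (A : Matrix (Fin m) (Fin n) ℤ)
    (h : TwoNonzeroPerRow A) : ℕ :=
  TDMtw (matrixGraph A h) (fun e => matrixSign A e) (fun j => matrixRoots A j)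

/-- The largest absolute value of an entry of `A`. -/
def maxAbsEntry {m n : ℕ} (A : Matrix (Fin m) (Fin n) ℤ) : ℕ :=
  Finset.sup Finset.univ fun i => Finset.sup Finset.univ fun j => (A i j).natAbs

/-- `A` is totally `Δ`-modular: every square subdeterminant has absolute value at
most `Δ`. -/
def TotallyDeltaModular {m n : ℕ} (A : Matrix (Fin m) (Fin n) ℤ) (Δ : ℕ) : Prop :=
  ∀ (s : ℕ) (r : Fin s → Fin m) (c : Fin s → Fin n),
    Function.Injective r → Function.Injective c →
    ((A.submatrix r c).det).natAbs ≤ Δ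

/-- The set of objective values of feasible points of the integer program
`max { wᵀx : Ax ≤ b, ℓ ≤ x ≤ u, x integral }`. -/
def IPvalues {m n : ℕ} (A : Matrix (Fin m) (Fin n) ℤ) (b : Fin m → ℤ)
    (w ℓ u : Fin n → ℤ) : Set ℤ :=
  {y | ∃ x : Fin n → ℤ, (∀ i, ∑ j, A i j * x j ≤ b i) ∧
    (∀ j, ℓ j ≤ x j ∧ x j ≤ u j) ∧ y = ∑ j, w j * x j}

/-- `o` solves the maximization problem over `S`: it is `none` iff `S` is
infeasible, and otherwise it is the maximum value. -/
def SolvesIP (o : Option ℤ) (S : Set ℤ) : Prop :=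
  (o = none ∧ S = ∅) ∨ ∃ y, o = some y ∧ IsGreatest S y


lemma exists_pair {α : Type} (z : Sym2 α) : ∃ p : α × α, z = s(p.1, p.2) :=
  Sym2.ind (fun a b => ⟨(a, b), rfl⟩) z

/-- A chosen first endpoint of an edge. -/
noncomputable def MGraph.ep1 (G : MGraph) (e : G.E) : G.V :=
  (exists_pair (G.ends e)).choose.1

/-- A chosen second endpoint of an edge. -/
noncomputable def MGraph.ep2 (G : MGraph) (e : G.E) : G.V :=
  (exists_pair (G.ends e)).choose.2

lemma MGraph.ends_ep (G : MGraph) (e : G.E) : G.ends e = s(G.ep1 e, G.ep2 e) :=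
  (exists_pair (G.ends e)).choose_spec

lemma map_inl_not_isDiag {α β : Type} (z : Sym2 α) (hz : ¬ z.IsDiag) :
    ¬ (z.map (Sum.inl : α → α ⊕ β)).IsDiag := by
  induction z using Sym2.ind with
  | _ a b =>
    simp only [Sym2.map_pair_eq, Sym2.mk_isDiag_iff] at *
    exact fun h => hz (by injection h)

/-- The graph obtained from `(G,γ)` by subdividing every even edge exactly once. -/
noncomputable def subdivideEven (G : MGraph) (γ : G.E → ZMod 2) : MGraph where
  V := G.V ⊕ {e : G.E // γ e = 0}
  E := {e : G.E // γ e ≠ 0} ⊕ ({e : G.E // γ e = 0} × Bool)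
  finV := inferInstance
  finE := inferInstance
  ends := fun x =>
    match x with
    | .inl e => (G.ends e.1).map .inl
    | .inr (e, b) => s(.inr e, .inl (if b then G.ep1 e.1 else G.ep2 e.1))
  loopless := fun x => by
    match x with
    | .inl e => exact map_inl_not_isDiag _ (G.loopless e.1)
    | .inr (e, b) =>
      rw [Sym2.mk_isDiag_iff]
      simp

/-- Minimum degree at least `d` (each vertex is incident to at least `d` edges). -/
def minDegreeGE (G : MGraph) (d : ℕ) : Prop :=
  ∀ v : G.V, d ≤ {e : G.E | v ∈ G.ends e}.ncard

/-- The `j`-th vertex of the subdividing path: `u`, then `ℓ` new internal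
vertices, then `v`. -/
def pathVert {α : Type} (u v : α) (ℓ : ℕ) (j : Fin (ℓ + 2)) : α ⊕ Fin ℓ :=
  if h0 : j.1 = 0 then .inl u
  else if h1 : j.1 = ℓ + 1 then .inl v
  else .inr ⟨j.1 - 1, by have := j.2; omega⟩

/-- The graph obtained from `G` by replacing the edge `e₀` (with ends `u,v`) by a
path with `ℓ` internal vertices (hence `ℓ + 1` edges). -/
def replaceEdge (G : MGraph) (e₀ : G.E) (u v : G.V) (h : G.ends e₀ = s(u, v))
    (ℓ : ℕ) : MGraph where
  V := G.V ⊕ Fin ℓ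
  E := {e : G.E // e ≠ e₀} ⊕ Fin (ℓ + 1)
  finV := inferInstance
  finE := inferInstance
  ends := fun x =>
    match x with
    | .inl e => (G.ends e.1).map .inl
    | .inr i => s(pathVert u v ℓ ⟨i.1, by have := i.2; omega⟩,
        pathVert u v ℓ ⟨i.1 + 1, by have := i.2; omega⟩)
  loopless := fun x => by
    match x with
    | .inl e => exact map_inl_not_isDiag _ (G.loopless e.1)
    | .inr i =>
      rw [Sym2.mk_isDiag_iff]
      have huv : u ≠ v := by
        intro hc
        exact G.loopless e₀ (by rw [h, hc]; simp)
      have hi := i.2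
      simp only [pathVert]
      split_ifs <;> (simp_all; try omega)

/-- The signing of `replaceEdge`: old edges keep their sign, the `i`-th path edge
gets sign `δ i`. -/
def replaceGamma {G : MGraph} {e₀ : G.E} {u v : G.V} {h : G.ends e₀ = s(u, v)}
    {ℓ : ℕ} (γ : G.E → ZMod 2) (δ : Fin (ℓ + 1) → ZMod 2) :
    (replaceEdge G e₀ u v h ℓ).E → ZMod 2 :=
  fun x => match x with
  | .inl e => γ e.1
  | .inr i => δ i


namespace S3
open MGraph Finset

/-! ### Generic helpers -/

lemma zmod2_cases (x : ZMod 2) : x = 0 ∨ x = 1 := by revert x; decide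

lemma zmod2_add_self (x : ZMod 2) : x + x = 0 := by
  rcases zmod2_cases x with h | h <;> (rw [h]; decide)

lemma zmod2_ne (x y : ZMod 2) (h : x ≠ y) : x + 1 = y := by
  rcases zmod2_cases x with h1 | h1 <;> rcases zmod2_cases y with h2 | h2 <;>
    simp_all <;> decide

/-- char-2 telescope: `∑_{t<m} (g t + g (t+1)) = g 0 + g m`. -/
lemma telescope2 (g : ℕ → ZMod 2) (m : ℕ) :
    ∑ t ∈ Finset.range m, (g t + g (t + 1)) = g 0 + g m := by
  induction m with
  | zero => simp [zmod2_add_self]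
  | succ m ih =>
    rw [Finset.sum_range_succ, ih, add_assoc, ← add_assoc (g m),
      zmod2_add_self, zero_add]

/-! ### Vertices and edges of grids by coordinates -/

def inBox (k : ℕ) (p : ℕ × ℕ) : Prop := p.1 < k ∧ p.2 < k

def mkV (k : ℕ) (p : ℕ × ℕ) (h : inBox k p) : (gridGraph k).V :=
  (⟨p.1, h.1⟩, ⟨p.2, h.2⟩)

def coordOf {k : ℕ} (v : (gridGraph k).V) : ℕ × ℕ := (v.1.1, v.2.1)

@[simp] lemma coordOf_mkV (k : ℕ) (p : ℕ × ℕ) (h : inBox k p) :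
    coordOf (mkV k p h) = p := by cases p; rfl

lemma coordOf_inj {k : ℕ} : Function.Injective (coordOf (k := k)) := by
  rintro ⟨⟨a, _⟩, ⟨b, _⟩⟩ ⟨⟨c, _⟩, ⟨d, _⟩⟩ h
  simp only [coordOf, Prod.mk.injEq] at h
  obtain ⟨rfl, rfl⟩ := h; rfl

def mkE (k : ℕ) (p q : ℕ × ℕ) (hadj : gridAdj p q) (hp : inBox k p)
    (hq : inBox k q) : (gridGraph k).E :=
  ⟨s(mkV k p hp, mkV k q hq),
    ⟨mkV k p hp, mkV k q hq, by cases p; cases q; exact hadj, rfl⟩⟩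

lemma mkE_symm (k : ℕ) (p q : ℕ × ℕ) (hadj : gridAdj p q) (hadj' : gridAdj q p)
    (hp : inBox k p) (hq : inBox k q) :
    mkE k p q hadj hp hq = mkE k q p hadj' hq hp := by
  apply Subtype.ext
  exact Sym2.eq_swap

lemma gridAdj_symm {p q : ℕ × ℕ} (h : gridAdj p q) : gridAdj q p := by
  unfold gridAdj at *; tauto

open Classical in
/-- Total signed-edge evaluation on coordinates (0 outside). -/
noncomputable def γE (k : ℕ) (γ : (gridGraph k).E → ZMod 2) (p q : ℕ × ℕ) :
    ZMod 2 :=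
  if h : gridAdj p q ∧ inBox k p ∧ inBox k q then γ (mkE k p q h.1 h.2.1 h.2.2)
  else 0

lemma γE_eq (k : ℕ) (γ : (gridGraph k).E → ZMod 2) (p q : ℕ × ℕ)
    (hadj : gridAdj p q) (hp : inBox k p) (hq : inBox k q) :
    γE k γ p q = γ (mkE k p q hadj hp hq) := by
  simp only [γE]
  rw [dif_pos ⟨hadj, hp, hq⟩]

/-! ### Building paths from coordinate walks -/

def buildPath (k n : ℕ) (f : ℕ → ℕ × ℕ)
    (hb : ∀ t, t ≤ n → inBox k (f t))
    (hinj : ∀ t u, t ≤ n → u ≤ n → f t = f u → t = u)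
    (hadj : ∀ t, t < n → gridAdj (f t) (f (t + 1))) : (gridGraph k).Path where
  n := n
  vtx := fun t => mkV k (f t.1) (hb t.1 (by omega))
  edge := fun t => mkE k (f t.1) (f (t.1 + 1)) (hadj t.1 t.2)
    (hb t.1 (by omega)) (hb (t.1 + 1) (by omega))
  vtx_inj := by
    intro a b h
    have : f a.1 = f b.1 := by
      have := congrArg coordOf h
      simpa using this
    exact Fin.ext (hinj a.1 b.1 (by omega) (by omega) this)
  ends_eq := fun i => rfl

lemma buildPath_first (k n f hb hinj hadj) :
    coordOf (buildPath k n f hb hinj hadj).first = f 0 := by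
  simp [buildPath, MGraph.Path.first]

lemma buildPath_last (k n f hb hinj hadj) :
    coordOf (buildPath k n f hb hinj hadj).last = f n := by
  simp [buildPath, MGraph.Path.last, Fin.last]

lemma buildPath_parity (k n f hb hinj hadj) (γ : (gridGraph k).E → ZMod 2) :
    (buildPath k n f hb hinj hadj).parity γ =
      ∑ t ∈ Finset.range n, γE k γ (f t) (f (t + 1)) := by
  rw [MGraph.Path.parity]
  have h1 : ∀ i : Fin (buildPath k n f hb hinj hadj).n,
      γ ((buildPath k n f hb hinj hadj).edge i) = γE k γ (f i.1) (f (i.1 + 1)) := by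
    intro i
    exact (γE_eq k γ _ _ (hadj i.1 i.2) (hb i.1 (by exact Nat.le_of_lt i.2))
      (hb (i.1 + 1) (by exact i.2))).symm
  rw [Finset.sum_congr rfl (fun i _ => h1 i)]
  exact Fin.sum_univ_eq_sum_range (fun t => γE k γ (f t) (f (t + 1))) n

lemma buildPath_support (k n f hb hinj hadj) {S : Set (ℕ × ℕ)}
    (hS : ∀ t, t ≤ n → f t ∈ S) :
    ∀ v ∈ (buildPath k n f hb hinj hadj).support, coordOf v ∈ S := by
  rintro v ⟨t, rfl⟩
  simpa [buildPath] using hS t.1 (by exact Nat.lt_succ_iff.mp t.2)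

lemma buildPath_internals (k n f hb hinj hadj) {S : Set (ℕ × ℕ)}
    (hS : ∀ t, 0 < t → t < n → f t ∈ S) :
    ∀ v ∈ (buildPath k n f hb hinj hadj).internals, coordOf v ∈ S := by
  rintro v ⟨⟨t, rfl⟩, hne⟩
  simp only [Set.mem_insert_iff, Set.mem_singleton_iff, not_or] at hne
  have h0 : t.1 ≠ 0 := by
    intro h
    exact hne.1 (by
      apply congrArg (buildPath k n f hb hinj hadj).vtx
      exact Fin.ext h)
  have h1 : t.1 ≠ n := by
    intro h
    exact hne.2 (by
      apply congrArg (buildPath k n f hb hinj hadj).vtx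
      exact Fin.ext (by exact h))
  have ht : t.1 < n + 1 := t.2
  simpa [buildPath] using hS t.1 (by omega) (by omega)

lemma γE_comm (K : ℕ) (γ : (gridGraph K).E → ZMod 2) (p q : ℕ × ℕ) :
    γE K γ p q = γE K γ q p := by
  simp only [γE]
  by_cases h : gridAdj p q ∧ inBox K p ∧ inBox K q
  · rw [dif_pos h, dif_pos ⟨gridAdj_symm h.1, h.2.2, h.2.1⟩,
      mkE_symm K p q h.1 (gridAdj_symm h.1) h.2.1 h.2.2]
  · rw [dif_neg h, dif_neg (by
      intro hc
      exact h ⟨gridAdj_symm hc.1, hc.2.2, hc.2.1⟩)]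

/-- horizontal / vertical signed edge values and face parities, on coordinates -/
noncomputable def γh (K : ℕ) (γ : (gridGraph K).E → ZMod 2) (r c : ℕ) : ZMod 2 :=
  γE K γ (r, c) (r, c + 1)
noncomputable def γv (K : ℕ) (γ : (gridGraph K).E → ZMod 2) (r c : ℕ) : ZMod 2 :=
  γE K γ (r, c) (r + 1, c)
noncomputable def Fp (K : ℕ) (γ : (gridGraph K).E → ZMod 2) (r c : ℕ) : ZMod 2 :=
  γh K γ r c + γh K γ (r + 1) c + γv K γ r c + γv K γ r (c + 1)

section Regions
open Finset

variable (k : ℕ)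

/-- The coordinate of the `i`-th grid row/column of the embedded small grid. -/
def Rc (k i : ℕ) : ℕ := i * (k + 1)

lemma Rc_succ (i : ℕ) : Rc k (i + 1) = Rc k i + (k + 1) := by
  simp [Rc, Nat.succ_mul]

lemma Rc_lt_Rc {i j : ℕ} : Rc k i < Rc k j ↔ i < j := by
  simp [Rc, Nat.mul_lt_mul_right (by omega : 0 < k + 1)]

lemma Rc_le_Rc {i j : ℕ} : Rc k i ≤ Rc k j ↔ i ≤ j := by
  rw [← Nat.not_lt, ← Nat.not_lt, Rc_lt_Rc]

lemma Rc_bound {i : ℕ} (hk : 2 ≤ k) (hi : i < k) : Rc k i ≤ k ^ 2 - 1 := by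
  obtain ⟨m, rfl⟩ : ∃ m, k = m + 1 := ⟨k - 1, by omega⟩
  have h1 : Rc (m + 1) i ≤ Rc (m + 1) m := (Rc_le_Rc _).mpr (by omega)
  have e1 : Rc (m + 1) m = m * m + 2 * m := by simp [Rc]; ring
  have e2 : (m + 1) ^ 2 = m * m + 2 * m + 1 := by ring
  omega

/-- Region containing the internal vertices of the horizontal path of edge `(i,j)-(i,j+1)`. -/
def openH (i j : ℕ) : Set (ℕ × ℕ) :=
  {p | p.1 = Rc k i ∧ Rc k j < p.2 ∧ p.2 < Rc k (j + 1)}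

def closedH (i j : ℕ) : Set (ℕ × ℕ) :=
  {p | p.1 = Rc k i ∧ Rc k j ≤ p.2 ∧ p.2 ≤ Rc k (j + 1)}

def openV (i j : ℕ) : Set (ℕ × ℕ) :=
  {p | Rc k i < p.1 ∧ p.1 < Rc k (i + 1) ∧ Rc k j - k ≤ p.2 ∧ p.2 ≤ Rc k j}

def closedV (i j : ℕ) : Set (ℕ × ℕ) :=
  {p | (p.2 = Rc k j ∧ Rc k i ≤ p.1 ∧ p.1 ≤ Rc k (i + 1)) ∨ p ∈ openV k i j}

/- basic arithmetic facts -/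
lemma Rc_not_between {i m : ℕ} (h1 : Rc k i < Rc k m) (h2 : Rc k m < Rc k (i + 1)) :
    False := by
  rw [Rc_lt_Rc] at h1 h2; omega

lemma Rc_gap {i m : ℕ} (h : i < m) : Rc k i + (k + 1) ≤ Rc k m := by
  rw [← Rc_succ]; exact (Rc_le_Rc k).mpr (by omega)

lemma regionHH {i j i' j' : ℕ} (h : i ≠ j → True) (hne : ¬(i = i' ∧ j = j'))
    {p : ℕ × ℕ} (hp : p ∈ openH k i j) (hp' : p ∈ closedH k i' j') : False := by
  obtain ⟨e1, e2, e3⟩ := hp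
  obtain ⟨f1, f2, f3⟩ := hp'
  rcases Nat.lt_trichotomy i i' with hc | hc | hc
  · exact absurd (e1 ▸ f1) (by have := Rc_gap k hc; omega)
  · subst hc
    have hj : j ≠ j' := by tauto
    rcases Nat.lt_trichotomy j j' with hd | hd | hd
    · have := Rc_gap k (show j + 1 ≤ j' by omega)
      rw [← Rc_succ] at *
      have := Rc_gap k (Nat.lt_succ_self j)
      omega
    · exact hj hd
    · have := Rc_gap k (show j' + 1 ≤ j by omega)
      rw [← Rc_succ] at *
      have := Rc_gap k (Nat.lt_succ_self j')
      omega
  · exact absurd (e1 ▸ f1).symm (by have := Rc_gap k hc; omega)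

lemma regionHV {i j i' j' : ℕ} {p : ℕ × ℕ}
    (hp : p ∈ openH k i j) (hp' : p ∈ closedV k i' j') : False := by
  obtain ⟨e1, e2, e3⟩ := hp
  rcases hp' with ⟨f1, f2, f3⟩ | ⟨f1, f2, f3, f4⟩
  · -- p.2 = Rc j' strictly between Rc j and Rc (j+1): impossible
    exact Rc_not_between k (f1 ▸ e2) (f1 ▸ e3)
  · -- p.1 = Rc i strictly between Rc i' and Rc (i'+1): impossible
    exact Rc_not_between k (e1 ▸ f1) (e1 ▸ f2)

lemma regionVH {i j i' j' : ℕ} {p : ℕ × ℕ}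
    (hp : p ∈ openV k i j) (hp' : p ∈ closedH k i' j') : False := by
  obtain ⟨e1, e2, e3, e4⟩ := hp
  obtain ⟨f1, f2, f3⟩ := hp'
  exact Rc_not_between k (f1 ▸ e1) (f1 ▸ e2)

lemma regionVV {i j i' j' : ℕ} (hne : ¬(i = i' ∧ j = j')) {p : ℕ × ℕ}
    (hp : p ∈ openV k i j) (hp' : p ∈ closedV k i' j') : False := by
  obtain ⟨e1, e2, e3, e4⟩ := hp
  have hii' : i = i' := by
    rcases Nat.lt_trichotomy i i' with hc | hc | hc
    · exfalso
      have hg : Rc k (i + 1) ≤ Rc k i' := (Rc_le_Rc k).mpr (by omega)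
      rcases hp' with ⟨f1, f2, f3⟩ | ⟨f1, f2, f3, f4⟩ <;> omega
    · exact hc
    · exfalso
      have hg : Rc k (i' + 1) ≤ Rc k i := (Rc_le_Rc k).mpr (by omega)
      rcases hp' with ⟨f1, f2, f3⟩ | ⟨f1, f2, f3, f4⟩ <;> omega
  subst hii'
  have hj : j ≠ j' := by tauto
  have hgap : (Rc k j + (k + 1) ≤ Rc k j') ∨ (Rc k j' + (k + 1) ≤ Rc k j) := by
    rcases Nat.lt_trichotomy j j' with hc | hc | hc
    · exact Or.inl (Rc_gap k hc)
    · exact absurd hc hj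
    · exact Or.inr (Rc_gap k hc)
  rcases hp' with ⟨f1, f2, f3⟩ | ⟨f1, f2, f3, f4⟩ <;> omega

lemma regionHPhi {i j i' j' : ℕ} {p : ℕ × ℕ} (hp : p ∈ openH k i j)
    (hp' : p = (Rc k i', Rc k j')) : False := by
  obtain ⟨e1, e2, e3⟩ := hp
  subst hp'
  exact Rc_not_between k e2 e3

lemma regionVPhi {i j i' j' : ℕ} {p : ℕ × ℕ} (hp : p ∈ openV k i j)
    (hp' : p = (Rc k i', Rc k j')) : False := by
  obtain ⟨e1, e2, e3, e4⟩ := hp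
  subst hp'
  exact Rc_not_between k e1 e2

end Regions

section Paths
open Finset

variable (K : ℕ) (γ : (gridGraph K).E → ZMod 2)

lemma horiz_path (r c n : ℕ) (hn : 1 ≤ n) (hr : r < K) (hc : c + n < K) :
    ∃ P : (gridGraph K).Path,
      coordOf P.first = (r, c) ∧ coordOf P.last = (r, c + n) ∧
      P.parity γ = ∑ t ∈ range n, γh K γ r (c + t) ∧
      (∀ v ∈ P.internals, v.1.1 = r ∧ c < v.2.1 ∧ v.2.1 < c + n) ∧
      (∀ v ∈ P.support, v.1.1 = r ∧ c ≤ v.2.1 ∧ v.2.1 ≤ c + n) := by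
  have hb : ∀ t, t ≤ n → inBox K (r, c + t) := fun t ht => ⟨hr, by omega⟩
  have hinj : ∀ t u, t ≤ n → u ≤ n → ((r, c + t) : ℕ × ℕ) = (r, c + u) → t = u := by
    intro t u _ _ h
    simp only [Prod.mk.injEq] at h
    omega
  have hadj : ∀ t, t < n → gridAdj (r, c + t) (r, c + (t + 1)) := by
    intro t _
    exact Or.inl ⟨rfl, Or.inl rfl⟩
  refine ⟨buildPath K n _ hb hinj hadj, ?_, ?_, ?_, ?_, ?_⟩
  · rw [buildPath_first]; simp
  · rw [buildPath_last]
  · rw [buildPath_parity]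
    exact Finset.sum_congr rfl (fun t _ => rfl)
  · intro v hv
    have := buildPath_internals K n _ hb hinj hadj
      (S := {p | p.1 = r ∧ c < p.2 ∧ p.2 < c + n})
      (fun t h1 h2 => ⟨rfl, by omega, by omega⟩) v hv
    exact this
  · intro v hv
    exact buildPath_support K n _ hb hinj hadj
      (S := {p | p.1 = r ∧ c ≤ p.2 ∧ p.2 ≤ c + n})
      (fun t ht => ⟨rfl, by omega, by omega⟩) v hv

lemma vert_path (r c n : ℕ) (hn : 1 ≤ n) (hr : r + n < K) (hc : c < K) :
    ∃ P : (gridGraph K).Path,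
      coordOf P.first = (r, c) ∧ coordOf P.last = (r + n, c) ∧
      P.parity γ = ∑ t ∈ range n, γv K γ (r + t) c ∧
      (∀ v ∈ P.internals, v.2.1 = c ∧ r < v.1.1 ∧ v.1.1 < r + n) ∧
      (∀ v ∈ P.support, v.2.1 = c ∧ r ≤ v.1.1 ∧ v.1.1 ≤ r + n) := by
  have hb : ∀ t, t ≤ n → inBox K (r + t, c) := fun t ht => ⟨by omega, hc⟩
  have hinj : ∀ t u, t ≤ n → u ≤ n → ((r + t, c) : ℕ × ℕ) = (r + u, c) → t = u := by
    intro t u _ _ h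
    simp only [Prod.mk.injEq] at h
    omega
  have hadj : ∀ t, t < n → gridAdj (r + t, c) (r + (t + 1), c) := by
    intro t _
    exact Or.inr ⟨rfl, Or.inl rfl⟩
  refine ⟨buildPath K n _ hb hinj hadj, ?_, ?_, ?_, ?_, ?_⟩
  · rw [buildPath_first]; simp
  · rw [buildPath_last]
  · rw [buildPath_parity]
    exact Finset.sum_congr rfl (fun t _ => rfl)
  · intro v hv
    exact buildPath_internals K n _ hb hinj hadj
      (S := {p | p.2 = c ∧ r < p.1 ∧ p.1 < r + n})
      (fun t h1 h2 => ⟨rfl, by omega, by omega⟩) v hv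
  · intro v hv
    exact buildPath_support K n _ hb hinj hadj
      (S := {p | p.2 = c ∧ r ≤ p.1 ∧ p.1 ≤ r + n})
      (fun t ht => ⟨rfl, by omega, by omega⟩) v hv

/-- the coordinate walk of a bumped vertical path -/
def bumpF (a c₁ d w : ℕ) (t : ℕ) : ℕ × ℕ :=
  if t ≤ d then (a + t, c₁ + w)
  else if t ≤ d + w then (a + d, c₁ + (w - (t - d)))
  else if t ≤ d + 2 * w + 1 then (a + d + 1, c₁ + (t - (d + w + 1)))
  else (a + (t - 2 * w), c₁ + w)

lemma bumpF_e1 {a c₁ d w t : ℕ} (h : t ≤ d) : bumpF a c₁ d w t = (a + t, c₁ + w) :=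
  if_pos h

lemma bumpF_e2 {a c₁ d w t : ℕ} (h : t ≤ w) (hw : 1 ≤ w) :
    bumpF a c₁ d w (d + t) = (a + d, c₁ + (w - t)) := by
  rcases Nat.eq_zero_or_pos t with rfl | ht
  · simp [bumpF]
  · rw [bumpF, if_neg (by omega), if_pos (by omega), Prod.mk.injEq]
    exact ⟨rfl, by omega⟩

lemma bumpF_e3 {a c₁ d w t : ℕ} (h : t ≤ w) (hw : 1 ≤ w) :
    bumpF a c₁ d w (d + w + 1 + t) = (a + d + 1, c₁ + t) := by
  rw [bumpF, if_neg (by omega), if_neg (by omega), if_pos (by omega), Prod.mk.injEq]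
  exact ⟨rfl, by omega⟩

lemma bumpF_e4 {a c₁ d w t : ℕ} (h : 1 ≤ t) (hw : 1 ≤ w) :
    bumpF a c₁ d w (d + 2 * w + 1 + t) = (a + d + 1 + t, c₁ + w) := by
  rw [bumpF, if_neg (by omega), if_neg (by omega), if_neg (by omega), Prod.mk.injEq]
  exact ⟨by omega, rfl⟩

lemma bumpF_e5 {a c₁ d w t : ℕ} (hw : 1 ≤ w) :
    bumpF a c₁ d w (d + 2 * w + 1 + t) = (a + d + 1 + t, c₁ + w) := by
  rcases Nat.eq_zero_or_pos t with rfl | ht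
  · have := bumpF_e3 (a := a) (c₁ := c₁) (d := d) (le_refl w) hw
    rw [(by omega : d + 2 * w + 1 + 0 = d + w + 1 + w), this]
  · exact bumpF_e4 ht hw

/-- The key character-2 telescoping identity for the bump parity. -/
lemma bump_sum (a c₁ d w m : ℕ) :
    (∑ t ∈ range d, γv K γ (a + t) (c₁ + w)) +
      (∑ t ∈ range w, γh K γ (a + d) (c₁ + t)) +
      γv K γ (a + d) c₁ +
      (∑ t ∈ range w, γh K γ (a + d + 1) (c₁ + t)) +
      (∑ t ∈ range m, γv K γ (a + d + 1 + t) (c₁ + w)) =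
    (∑ t ∈ range (d + 1 + m), γv K γ (a + t) (c₁ + w)) +
      ∑ t ∈ range w, Fp K γ (a + d) (c₁ + t) := by
  have hsplit : ∑ t ∈ range (d + 1 + m), γv K γ (a + t) (c₁ + w) =
      (∑ t ∈ range d, γv K γ (a + t) (c₁ + w)) + γv K γ (a + d) (c₁ + w) +
        ∑ t ∈ range m, γv K γ (a + d + 1 + t) (c₁ + w) := by
    rw [Finset.sum_range_add, Finset.sum_range_succ]
    congr 1
    apply Finset.sum_congr rfl
    intro t _
    rw [(by omega : a + (d + 1 + t) = a + d + 1 + t)]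
  have hFp : ∑ t ∈ range w, Fp K γ (a + d) (c₁ + t) =
      ((∑ t ∈ range w, γh K γ (a + d) (c₁ + t)) +
        ∑ t ∈ range w, γh K γ (a + d + 1) (c₁ + t)) +
      (γv K γ (a + d) c₁ + γv K γ (a + d) (c₁ + w)) := by
    have hCD : (∑ x ∈ range w, γv K γ (a + d) (c₁ + x)) +
        ∑ x ∈ range w, γv K γ (a + d) (c₁ + x + 1) =
        γv K γ (a + d) c₁ + γv K γ (a + d) (c₁ + w) := by
      rw [← Finset.sum_add_distrib]
      have := telescope2 (fun t => γv K γ (a + d) (c₁ + t)) w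
      simpa [add_assoc] using this
    simp only [Fp]
    rw [Finset.sum_add_distrib, Finset.sum_add_distrib, Finset.sum_add_distrib,
      add_assoc, hCD]
  rw [hsplit, hFp]
  generalize (∑ t ∈ range d, γv K γ (a + t) (c₁ + w)) = A
  generalize (∑ t ∈ range w, γh K γ (a + d) (c₁ + t)) = B
  generalize (∑ t ∈ range w, γh K γ (a + d + 1) (c₁ + t)) = D
  generalize (∑ t ∈ range m, γv K γ (a + d + 1 + t) (c₁ + w)) = E
  generalize γv K γ (a + d) c₁ = X
  generalize γv K γ (a + d) (c₁ + w) = Y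
  revert A B D E X Y
  decide

lemma bump_path (a c₁ d w m : ℕ) (hd : 1 ≤ d) (hw : 1 ≤ w) (hm : 1 ≤ m)
    (hrow : a + d + 1 + m < K) (hcol : c₁ + w < K) :
    ∃ P : (gridGraph K).Path,
      coordOf P.first = (a, c₁ + w) ∧ coordOf P.last = (a + d + 1 + m, c₁ + w) ∧
      P.parity γ = (∑ t ∈ range (d + 1 + m), γv K γ (a + t) (c₁ + w)) +
        ∑ t ∈ range w, Fp K γ (a + d) (c₁ + t) ∧
      (∀ v ∈ P.internals,
        (v.2.1 = c₁ + w ∧ a < v.1.1 ∧ v.1.1 < a + d + 1 + m) ∨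
        (a < v.1.1 ∧ v.1.1 < a + d + 1 + m ∧ c₁ ≤ v.2.1 ∧ v.2.1 ≤ c₁ + w)) ∧
      (∀ v ∈ P.support,
        (v.2.1 = c₁ + w ∧ a ≤ v.1.1 ∧ v.1.1 ≤ a + d + 1 + m) ∨
        (a < v.1.1 ∧ v.1.1 < a + d + 1 + m ∧ c₁ ≤ v.2.1 ∧ v.2.1 ≤ c₁ + w)) := by
  set n := d + (w + (1 + (w + m))) with hn
  have hb : ∀ t, t ≤ n → inBox K (bumpF a c₁ d w t) := by
    intro t ht
    rw [bumpF]
    simp only [inBox]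
    split_ifs <;> dsimp only <;> omega
  have hinj : ∀ t u, t ≤ n → u ≤ n → bumpF a c₁ d w t = bumpF a c₁ d w u → t = u := by
    intro t u ht hu h
    rw [bumpF, bumpF] at h
    split_ifs at h <;> (rw [Prod.mk.injEq] at h; omega)
  have hadj : ∀ t, t < n → gridAdj (bumpF a c₁ d w t) (bumpF a c₁ d w (t + 1)) := by
    intro t ht
    rw [bumpF, bumpF]
    simp only [gridAdj]
    split_ifs <;> dsimp only <;> omega
  refine ⟨buildPath K n _ hb hinj hadj, ?_, ?_, ?_, ?_, ?_⟩
  · rw [buildPath_first, bumpF_e1 (by omega)]; simp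
  · rw [buildPath_last]
    rw [(by omega : n = d + 2 * w + 1 + m), bumpF_e5 hw]
  · rw [buildPath_parity, ← bump_sum K γ a c₁ d w m]
    rw [hn, Finset.sum_range_add, Finset.sum_range_add, Finset.sum_range_add,
      Finset.sum_range_add]
    have hA : ∑ x ∈ range d, γE K γ (bumpF a c₁ d w x) (bumpF a c₁ d w (x + 1)) =
        ∑ t ∈ range d, γv K γ (a + t) (c₁ + w) := by
      apply Finset.sum_congr rfl
      intro t htt
      simp only [Finset.mem_range] at htt
      rw [bumpF_e1 (by omega), bumpF_e1 (by omega)]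
      rfl
    have hB : ∑ x ∈ range w,
        γE K γ (bumpF a c₁ d w (d + x)) (bumpF a c₁ d w (d + x + 1)) =
        ∑ t ∈ range w, γh K γ (a + d) (c₁ + t) := by
      rw [← Finset.sum_range_reflect (fun t => γh K γ (a + d) (c₁ + t)) w]
      apply Finset.sum_congr rfl
      intro t htt
      simp only [Finset.mem_range] at htt
      rw [bumpF_e2 (by omega) hw,
        (by omega : d + t + 1 = d + (t + 1)), bumpF_e2 (by omega) hw]
      rw [γE_comm]
      have h1 : w - t = (w - 1 - t) + 1 := by omega
      have h2 : w - (t + 1) = w - 1 - t := by omega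
      rw [h1, h2]
      rfl
    have hC : ∑ x ∈ range 1,
        γE K γ (bumpF a c₁ d w (d + (w + x))) (bumpF a c₁ d w (d + (w + x) + 1)) =
        γv K γ (a + d) c₁ := by
      rw [Finset.sum_range_one]
      rw [(by omega : d + (w + 0) = d + w), bumpF_e2 (le_refl w) hw,
        (by omega : d + w + 1 = d + w + 1 + 0), bumpF_e3 (by omega) hw]
      simp only [Nat.sub_self, add_zero]
      rfl
    have hD : ∑ x ∈ range w,
        γE K γ (bumpF a c₁ d w (d + (w + (1 + x))))
          (bumpF a c₁ d w (d + (w + (1 + x)) + 1)) =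
        ∑ t ∈ range w, γh K γ (a + d + 1) (c₁ + t) := by
      apply Finset.sum_congr rfl
      intro t htt
      simp only [Finset.mem_range] at htt
      rw [(by omega : d + (w + (1 + t)) = d + w + 1 + t), bumpF_e3 (by omega) hw,
        (by omega : d + w + 1 + t + 1 = d + w + 1 + (t + 1)), bumpF_e3 (by omega) hw]
      rfl
    have hE : ∑ x ∈ range m,
        γE K γ (bumpF a c₁ d w (d + (w + (1 + (w + x)))))
          (bumpF a c₁ d w (d + (w + (1 + (w + x))) + 1)) =
        ∑ t ∈ range m, γv K γ (a + d + 1 + t) (c₁ + w) := by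
      apply Finset.sum_congr rfl
      intro t htt
      simp only [Finset.mem_range] at htt
      rw [(by omega : d + (w + (1 + (w + t))) = d + 2 * w + 1 + t), bumpF_e5 hw,
        (by omega : d + 2 * w + 1 + t + 1 = d + 2 * w + 1 + (t + 1)), bumpF_e5 hw]
      rfl
    rw [hA, hB, hC, hD, hE]
    ring
  · intro v hv
    have := buildPath_internals K n _ hb hinj hadj
      (S := {p | (p.2 = c₁ + w ∧ a < p.1 ∧ p.1 < a + d + 1 + m) ∨
        (a < p.1 ∧ p.1 < a + d + 1 + m ∧ c₁ ≤ p.2 ∧ p.2 ≤ c₁ + w)})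
      (fun t h1 h2 => by
        rw [bumpF]
        simp only [Set.mem_setOf_eq]
        split_ifs <;> dsimp only <;> omega) v hv
    exact this
  · intro v hv
    have := buildPath_support K n _ hb hinj hadj
      (S := {p | (p.2 = c₁ + w ∧ a ≤ p.1 ∧ p.1 ≤ a + d + 1 + m) ∨
        (a < p.1 ∧ p.1 < a + d + 1 + m ∧ c₁ ≤ p.2 ∧ p.2 ≤ c₁ + w)})
      (fun t ht => by
        rw [bumpF]
        simp only [Set.mem_setOf_eq]
        split_ifs <;> dsimp only <;> omega) v hv
    exact this

end Paths

section Assembly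
open Finset

/-- canonical steps in the small grid -/
def hstep {k : ℕ} (u v : (gridGraph k).V) : Prop :=
  u.1 = v.1 ∧ u.2.1 + 1 = v.2.1

def vstep {k : ℕ} (u v : (gridGraph k).V) : Prop :=
  u.2 = v.2 ∧ u.1.1 + 1 = v.1.1

lemma edge_rep {k : ℕ} (e : (gridGraph k).E) :
    ∃ u v, e.1 = s(u, v) ∧ (hstep u v ∨ vstep u v) := by
  obtain ⟨a, b, hadj, he⟩ := e.2
  rcases hadj with ⟨h1, h2 | h2⟩ | ⟨h1, h2 | h2⟩
  · exact ⟨a, b, he, Or.inl ⟨Fin.ext h1, h2⟩⟩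
  · exact ⟨b, a, he.trans Sym2.eq_swap, Or.inl ⟨(Fin.ext h1).symm, h2⟩⟩
  · exact ⟨a, b, he, Or.inr ⟨Fin.ext h1, h2⟩⟩
  · exact ⟨b, a, he.trans Sym2.eq_swap, Or.inr ⟨(Fin.ext h1).symm, h2⟩⟩

lemma sym2_cases {α : Type*} {u v u₀ v₀ : α} (h : s(u, v) = s(u₀, v₀)) :
    (u = u₀ ∧ v = v₀) ∨ (u = v₀ ∧ v = u₀) := by
  rwa [Sym2.eq_iff] at h

lemma hstep_det {k : ℕ} {u v v' : (gridGraph k).V} (h : hstep u v)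
    (h' : hstep u v') : v = v' := by
  obtain ⟨h1, h2⟩ := h
  obtain ⟨h1', h2'⟩ := h'
  exact Prod.ext (h1.symm.trans h1') (Fin.ext (by omega))

lemma vstep_det {k : ℕ} {u v v' : (gridGraph k).V} (h : vstep u v)
    (h' : vstep u v') : v = v' := by
  obtain ⟨h1, h2⟩ := h
  obtain ⟨h1', h2'⟩ := h'
  exact Prod.ext (Fin.ext (by omega)) (h1.symm.trans h1')

lemma vtx_of_coords {k : ℕ} {u u' : (gridGraph k).V}
    (h1 : u.1.1 = u'.1.1) (h2 : u.2.1 = u'.2.1) : u = u' :=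
  Prod.ext (Fin.ext h1) (Fin.ext h2)

/-- Assembling a signed subdivision of the small grid from a family of paths. -/
lemma assemble (k m : ℕ) (γ : (gridGraph m).E → ZMod 2)
    (σ : (gridGraph k).V → ZMod 2)
    (φV : (gridGraph k).V → (gridGraph m).V) (hφ : Function.Injective φV)
    (P : (gridGraph k).E → (gridGraph m).Path)
    (hends : ∀ e u v, (e : (gridGraph k).E).1 = s(u, v) →
      s((P e).first, (P e).last) = s(φV u, φV v))
    (hpar : ∀ e u v, (e : (gridGraph k).E).1 = s(u, v) →
      (P e).parity γ = σ u + σ v)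
    (hdisj : ∀ e e', e ≠ e' → Disjoint (P e).internals (P e').support)
    (hdisj2 : ∀ e, Disjoint (P e).internals (Set.range φV)) :
    IsSignedSubdivision (gridGraph k) (γ₀ (gridGraph k)) (gridGraph m) γ := by
  refine ⟨fun e => Sym2.lift ⟨fun u v => σ u + σ v, fun u v => add_comm _ _⟩ e.1,
    ⟨σ, ?_⟩, φV, P, hφ, ?_, ?_, hdisj, hdisj2⟩
  · intro e u v hev
    have h3 : e.1 = s(u, v) := hev
    dsimp only
    rw [h3]
    simp [γ₀, Sym2.lift_mk]
  · intro e u v hev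
    exact hends e u v hev
  · intro e
    obtain ⟨u, v, hev, _⟩ := edge_rep e
    dsimp only
    rw [hpar e u v hev, hev]
    rfl

lemma edges_empty {k : ℕ} (hk : k ≤ 1) (e : (gridGraph k).E) : False := by
  obtain ⟨u, v, _, ⟨h1, h2⟩ | ⟨h1, h2⟩⟩ := edge_rep e
  · have := v.2.2
    omega
  · have := v.1.2
    omega

lemma trivial_case (k : ℕ) (hk : k ≤ 1) (γ : (gridGraph (k ^ 2)).E → ZMod 2) :
    IsSignedSubdivision (gridGraph k) (γ₀ (gridGraph k)) (gridGraph (k ^ 2)) γ := by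
  have hle : k ≤ k ^ 2 := Nat.le_self_pow (by norm_num) k
  refine assemble k (k ^ 2) γ (fun _ => 0)
    (fun u => (Fin.castLE hle u.1, Fin.castLE hle u.2)) ?_
    (fun e => (edges_empty hk e).elim)
    (fun e => (edges_empty hk e).elim)
    (fun e => (edges_empty hk e).elim)
    (fun e e' => (edges_empty hk e).elim)
    (fun e => (edges_empty hk e).elim)
  intro u u' h
  replace h : _ ∧ _ := ⟨congrArg Prod.fst h, congrArg Prod.snd h⟩
  exact Prod.ext (Fin.castLE_injective hle h.1) (Fin.castLE_injective hle h.2)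

end Assembly

section CaseA
open Finset

variable (k : ℕ) (γ : (gridGraph (k ^ 2)).E → ZMod 2) (a b : ℕ)

/-- the potential function on an all-even window -/
noncomputable def pot (r c : ℕ) : ZMod 2 :=
  (∑ t ∈ range (c - b), γh (k ^ 2) γ a (b + t)) +
    ∑ t ∈ range (r - a), γv (k ^ 2) γ (a + t) c

lemma keyV (r c : ℕ) (hr : a ≤ r) :
    pot k γ a b r c + pot k γ a b (r + 1) c = γv (k ^ 2) γ r c := by
  simp only [pot]
  rw [(by omega : r + 1 - a = (r - a) + 1), Finset.sum_range_succ,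
    (by omega : a + (r - a) = r)]
  set S := ∑ t ∈ range (c - b), γh (k ^ 2) γ a (b + t)
  set X := ∑ t ∈ range (r - a), γv (k ^ 2) γ (a + t) c
  set Y := γv (k ^ 2) γ r c
  clear_value S X Y
  revert S X Y
  decide

lemma keyH (hk : 2 ≤ k)
    (heven : ∀ r c, a ≤ r → r ≤ a + k - 2 → b ≤ c → c ≤ b + k - 2 →
      Fp (k ^ 2) γ r c = 0)
    (r c : ℕ) (hr : a ≤ r) (hr2 : r ≤ a + k - 1) (hc : b ≤ c)
    (hc2 : c + 1 ≤ b + k - 1) :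
    pot k γ a b r c + pot k γ a b r (c + 1) = γh (k ^ 2) γ r c := by
  have hsum : ∀ t, t < r - a →
      γv (k ^ 2) γ (a + t) c + γv (k ^ 2) γ (a + t) (c + 1) =
      γh (k ^ 2) γ (a + t) c + γh (k ^ 2) γ (a + t + 1) c := by
    intro t ht
    have h0 := heven (a + t) c (by omega) (by omega) (by omega) (by omega)
    rw [Fp] at h0
    set A := γh (k ^ 2) γ (a + t) c
    set B := γh (k ^ 2) γ (a + t + 1) c
    set C := γv (k ^ 2) γ (a + t) c
    set D := γv (k ^ 2) γ (a + t) (c + 1)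
    clear_value A B C D
    revert h0
    revert A B C D
    decide
  have htel : ∑ t ∈ range (r - a),
      (γv (k ^ 2) γ (a + t) c + γv (k ^ 2) γ (a + t) (c + 1)) =
      γh (k ^ 2) γ a c + γh (k ^ 2) γ r c := by
    rw [Finset.sum_congr rfl (fun t ht => hsum t (Finset.mem_range.mp ht))]
    have h2 := telescope2 (fun t => γh (k ^ 2) γ (a + t) c) (r - a)
    simp only [show ∀ t : ℕ, a + (t + 1) = a + t + 1 from fun t => by omega] at h2
    rw [h2, Nat.add_zero, (by omega : a + (r - a) = r)]
  rw [Finset.sum_add_distrib] at htel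
  simp only [pot]
  rw [(by omega : c + 1 - b = (c - b) + 1), Finset.sum_range_succ,
    (by omega : b + (c - b) = c)]
  set S := ∑ t ∈ range (c - b), γh (k ^ 2) γ a (b + t)
  set X := ∑ t ∈ range (r - a), γv (k ^ 2) γ (a + t) c
  set Y := ∑ t ∈ range (r - a), γv (k ^ 2) γ (a + t) (c + 1)
  set G := γh (k ^ 2) γ a c
  set Hh := γh (k ^ 2) γ r c
  clear_value S X Y G Hh
  revert htel
  revert S X Y G Hh
  decide

lemma caseA (hk : 2 ≤ k) (ha : a + k ≤ k ^ 2) (hb : b + k ≤ k ^ 2)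
    (heven : ∀ r c, a ≤ r → r ≤ a + k - 2 → b ≤ c → c ≤ b + k - 2 →
      Fp (k ^ 2) γ r c = 0) :
    IsSignedSubdivision (gridGraph k) (γ₀ (gridGraph k)) (gridGraph (k ^ 2)) γ := by
  have hbox : ∀ u : (gridGraph k).V, inBox (k ^ 2) (a + u.1.1, b + u.2.1) := by
    intro u
    have h1 := u.1.2
    have h2 := u.2.2
    exact ⟨by omega, by omega⟩
  set φV : (gridGraph k).V → (gridGraph (k ^ 2)).V :=
    fun u => mkV (k ^ 2) (a + u.1.1, b + u.2.1) (hbox u) with hφV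
  set σ : (gridGraph k).V → ZMod 2 :=
    fun u => pot k γ a b (a + u.1.1) (b + u.2.1) with hσ
  have hco : ∀ u, coordOf (φV u) = (a + u.1.1, b + u.2.1) := fun u => rfl
  have hσ' : ∀ u, σ u = pot k γ a b (a + u.1.1) (b + u.2.1) := fun u => rfl
  -- per-edge bundle
  have hP : ∀ e : (gridGraph k).E, ∃ Q : (gridGraph (k ^ 2)).Path,
      (∃ u v, e.1 = s(u, v) ∧ s(Q.first, Q.last) = s(φV u, φV v) ∧
        Q.parity γ = σ u + σ v) ∧ Q.internals = ∅ := by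
    intro e
    obtain ⟨u, v, he, hst | hst⟩ := edge_rep e
    · -- horizontal step
      have h1 : u.1.1 = v.1.1 := congrArg Fin.val hst.1
      have h2 := hst.2
      have hu1 := u.1.2
      have hu2 := u.2.2
      have hv2 := v.2.2
      obtain ⟨Q, q1, q2, q3, q4, q5⟩ := horiz_path (k ^ 2) γ
        (a + u.1.1) (b + u.2.1) 1 (le_refl 1) (by omega) (by omega)
      refine ⟨Q, ⟨u, v, he, ?_, ?_⟩, ?_⟩
      · have e1 : Q.first = φV u := coordOf_inj (by rw [q1, hco u])
        have e2 : Q.last = φV v := coordOf_inj (by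
          rw [q2, hco v, Prod.mk.injEq]
          omega)
        rw [e1, e2]
      · rw [q3, Finset.sum_range_one, Nat.add_zero]
        have hkey := keyH k γ a b hk heven (a + u.1.1) (b + u.2.1)
          (by omega) (by omega) (by omega) (by omega)
        rw [← hkey, hσ' u, hσ' v, h1,
          (by omega : b + v.2.1 = b + u.2.1 + 1)]
      · rw [Set.eq_empty_iff_forall_notMem]
        intro x hx
        have := q4 x hx
        omega
    · -- vertical step
      have h1 : u.2.1 = v.2.1 := congrArg Fin.val hst.1
      have h2 := hst.2
      have hu1 := u.1.2
      have hu2 := u.2.2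
      have hv1 := v.1.2
      obtain ⟨Q, q1, q2, q3, q4, q5⟩ := vert_path (k ^ 2) γ
        (a + u.1.1) (b + u.2.1) 1 (le_refl 1) (by omega) (by omega)
      refine ⟨Q, ⟨u, v, he, ?_, ?_⟩, ?_⟩
      · have e1 : Q.first = φV u := coordOf_inj (by rw [q1, hco u])
        have e2 : Q.last = φV v := coordOf_inj (by
          rw [q2, hco v, Prod.mk.injEq]
          omega)
        rw [e1, e2]
      · rw [q3, Finset.sum_range_one, Nat.add_zero]
        have hkey := keyV k γ a b (a + u.1.1) (b + u.2.1) (by omega)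
        rw [← hkey, hσ' u, hσ' v, h1,
          (by omega : a + v.1.1 = a + u.1.1 + 1)]
      · rw [Set.eq_empty_iff_forall_notMem]
        intro x hx
        have := q4 x hx
        omega
  choose P hP1 hP2 using hP
  apply assemble k (k ^ 2) γ σ φV
  · intro u u' h
    have := congrArg coordOf h
    rw [hco, hco, Prod.mk.injEq] at this
    exact vtx_of_coords (by omega) (by omega)
  · intro e u v hev
    obtain ⟨u₀, v₀, he₀, hQ, hparQ⟩ := hP1 e
    have hee : s(u, v) = s(u₀, v₀) := by rw [← hev]; exact he₀
    rcases sym2_cases hee with ⟨rfl, rfl⟩ | ⟨rfl, rfl⟩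
    · exact hQ
    · rw [hQ]; exact Sym2.eq_swap
  · intro e u v hev
    obtain ⟨u₀, v₀, he₀, hQ, hparQ⟩ := hP1 e
    have hee : s(u, v) = s(u₀, v₀) := by rw [← hev]; exact he₀
    rcases sym2_cases hee with ⟨rfl, rfl⟩ | ⟨rfl, rfl⟩
    · exact hparQ
    · rw [hparQ]; exact add_comm _ _
  · intro e e' hne
    rw [Set.disjoint_left]
    intro x hx
    rw [hP2 e] at hx
    exact absurd hx (Set.notMem_empty x)
  · intro e
    rw [Set.disjoint_left]
    intro x hx
    rw [hP2 e] at hx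
    exact absurd hx (Set.notMem_empty x)

end CaseA

section CaseB
open Finset

variable (k : ℕ) (γ : (gridGraph (k ^ 2)).E → ZMod 2)

noncomputable def SV (i j : ℕ) : ZMod 2 :=
  ∑ t ∈ range (k + 1), γv (k ^ 2) γ (Rc k i + t) (Rc k j)

noncomputable def PH (i j : ℕ) : ZMod 2 :=
  ∑ t ∈ range (k + 1), γh (k ^ 2) γ (Rc k i) (Rc k j + t)

noncomputable def σB (u : (gridGraph k).V) : ZMod 2 :=
  (∑ t ∈ range u.1.1, SV k γ t 0) + ∑ t ∈ range u.2.1, PH k γ u.1.1 t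

lemma Rc_inj {i j : ℕ} (h : Rc k i = Rc k j) : i = j := by
  rcases Nat.lt_trichotomy i j with hc | hc | hc
  · exact absurd ((Rc_lt_Rc k).mpr hc) (by omega)
  · exact hc
  · exact absurd ((Rc_lt_Rc k).mpr hc) (by omega)

lemma sigma_horiz (u v : (gridGraph k).V) (hst : hstep u v) :
    σB k γ u + σB k γ v = PH k γ u.1.1 u.2.1 := by
  have e1 : v.1.1 = u.1.1 := (congrArg Fin.val hst.1).symm
  have e2 : v.2.1 = u.2.1 + 1 := hst.2.symm
  simp only [σB]
  rw [e1, e2, Finset.sum_range_succ]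
  set A := ∑ t ∈ range u.1.1, SV k γ t 0
  set B := ∑ t ∈ range u.2.1, PH k γ u.1.1 t
  set P := PH k γ u.1.1 u.2.1
  clear_value A B P
  revert A B P
  decide

lemma sigma_vert (u v : (gridGraph k).V) (hst : vstep u v) :
    σB k γ u + σB k γ v =
      SV k γ u.1.1 0 +
        ∑ t ∈ range u.2.1, (PH k γ u.1.1 t + PH k γ (u.1.1 + 1) t) := by
  have e1 : v.1.1 = u.1.1 + 1 := hst.2.symm
  have e2 : v.2.1 = u.2.1 := (congrArg Fin.val hst.1).symm
  simp only [σB]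
  rw [e1, e2, Finset.sum_range_succ]
  have hBC : (∑ t ∈ range u.2.1, PH k γ u.1.1 t) +
      ∑ t ∈ range u.2.1, PH k γ (u.1.1 + 1) t =
      ∑ t ∈ range u.2.1, (PH k γ u.1.1 t + PH k γ (u.1.1 + 1) t) :=
    (Finset.sum_add_distrib).symm
  set A := ∑ t ∈ range u.1.1, SV k γ t 0
  set B := ∑ t ∈ range u.2.1, PH k γ u.1.1 t
  set C := ∑ t ∈ range u.2.1, PH k γ (u.1.1 + 1) t
  set S := SV k γ u.1.1 0
  set R := ∑ t ∈ range u.2.1, (PH k γ u.1.1 t + PH k γ (u.1.1 + 1) t)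
  clear_value A B C S R
  revert hBC
  revert A B C S R
  decide

lemma caseB (hk : 2 ≤ k)
    (hodd : ∀ i j, i + 2 ≤ k → 1 ≤ j → j < k →
      ∃ r c, Rc k i + 1 ≤ r ∧ r + 1 ≤ Rc k i + k ∧ Rc k j + 1 ≤ c + k ∧
        c + 1 ≤ Rc k j ∧ Fp (k ^ 2) γ r c = 1) :
    IsSignedSubdivision (gridGraph k) (γ₀ (gridGraph k)) (gridGraph (k ^ 2)) γ := by
  have hpos : 0 < k ^ 2 := by positivity
  have hbox : ∀ u : (gridGraph k).V, inBox (k ^ 2) (Rc k u.1.1, Rc k u.2.1) := by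
    intro u
    have h1 := Rc_bound k hk u.1.2
    have h2 := Rc_bound k hk u.2.2
    exact ⟨by omega, by omega⟩
  set φV : (gridGraph k).V → (gridGraph (k ^ 2)).V :=
    fun u => mkV (k ^ 2) (Rc k u.1.1, Rc k u.2.1) (hbox u) with hφV
  have hco : ∀ u, coordOf (φV u) = (Rc k u.1.1, Rc k u.2.1) := fun u => rfl
  have hP : ∀ e : (gridGraph k).E, ∃ (Q : (gridGraph (k ^ 2)).Path)
      (u v : (gridGraph k).V), e.1 = s(u, v) ∧
      s(Q.first, Q.last) = s(φV u, φV v) ∧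
      Q.parity γ = σB k γ u + σB k γ v ∧
      ((hstep u v ∧ (∀ x ∈ Q.internals, coordOf x ∈ openH k u.1.1 u.2.1) ∧
          (∀ x ∈ Q.support, coordOf x ∈ closedH k u.1.1 u.2.1)) ∨
        (vstep u v ∧ (∀ x ∈ Q.internals, coordOf x ∈ openV k u.1.1 u.2.1) ∧
          (∀ x ∈ Q.support, coordOf x ∈ closedV k u.1.1 u.2.1))) := by
    intro e
    obtain ⟨u, v, he, hst | hst⟩ := edge_rep e
    · -- horizontal edge
      have e1 : v.1.1 = u.1.1 := (congrArg Fin.val hst.1).symm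
      have e2 : v.2.1 = u.2.1 + 1 := hst.2.symm
      have hjk : u.2.1 + 1 < k := by have := v.2.2; omega
      have hik : u.1.1 < k := u.1.2
      have hb1 := Rc_bound k hk hik
      have hb2 := Rc_bound k hk (show u.2.1 + 1 < k from hjk)
      have hRs : Rc k (u.2.1 + 1) = Rc k u.2.1 + (k + 1) := Rc_succ k u.2.1
      obtain ⟨Q, q1, q2, q3, q4, q5⟩ := horiz_path (k ^ 2) γ
        (Rc k u.1.1) (Rc k u.2.1) (k + 1) (by omega) (by omega) (by omega)
      refine ⟨Q, u, v, he, ?_, ?_, Or.inl ⟨hst, ?_, ?_⟩⟩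
      · have g1 : Q.first = φV u := coordOf_inj (by rw [q1, hco u])
        have g2 : Q.last = φV v := coordOf_inj (by
          rw [q2, hco v, Prod.mk.injEq, e1, e2]
          omega)
        rw [g1, g2]
      · rw [q3]
        exact (sigma_horiz k γ u v hst).symm
      · intro x hx
        have hq := q4 x hx
        simp only [openH, coordOf, Set.mem_setOf_eq]
        exact ⟨hq.1, by omega, by omega⟩
      · intro x hx
        have hq := q5 x hx
        simp only [closedH, coordOf, Set.mem_setOf_eq]
        exact ⟨hq.1, by omega, by omega⟩
    · -- vertical edge
      have e1 : v.1.1 = u.1.1 + 1 := hst.2.symm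
      have e2 : v.2.1 = u.2.1 := (congrArg Fin.val hst.1).symm
      have hik : u.1.1 + 1 < k := by have := v.1.2; omega
      have hjk : u.2.1 < k := u.2.2
      have hb1 := Rc_bound k hk (show u.1.1 + 1 < k from hik)
      have hb2 := Rc_bound k hk hjk
      have hRs : Rc k (u.1.1 + 1) = Rc k u.1.1 + (k + 1) := Rc_succ k u.1.1
      have hτ := sigma_vert k γ u v hst
      by_cases hSV : SV k γ u.1.1 u.2.1 = σB k γ u + σB k γ v
      · -- straight vertical path
        obtain ⟨Q, q1, q2, q3, q4, q5⟩ := vert_path (k ^ 2) γ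
          (Rc k u.1.1) (Rc k u.2.1) (k + 1) (by omega) (by omega) (by omega)
        refine ⟨Q, u, v, he, ?_, ?_, Or.inr ⟨hst, ?_, ?_⟩⟩
        · have g1 : Q.first = φV u := coordOf_inj (by rw [q1, hco u])
          have g2 : Q.last = φV v := coordOf_inj (by
            rw [q2, hco v, Prod.mk.injEq, e1, e2]
            omega)
          rw [g1, g2]
        · rw [q3]
          exact hSV
        · intro x hx
          have hq := q4 x hx
          simp only [openV, coordOf, Set.mem_setOf_eq]
          refine ⟨by omega, by omega, by omega, by omega⟩
        · intro x hx
          have hq := q5 x hx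
          simp only [closedV, openV, coordOf, Set.mem_setOf_eq]
          exact Or.inl ⟨hq.1, by omega, by omega⟩
      · -- bumped vertical path
        have hj1 : 1 ≤ u.2.1 := by
          by_contra hj0
          apply hSV
          have hz : u.2.1 = 0 := by omega
          rw [hτ, hz]
          simp
        obtain ⟨rs, cs, f1, f2, f3, f4, f5⟩ :=
          hodd u.1.1 u.2.1 (by omega) hj1 hjk
        set c₁ := Nat.findGreatest (fun c => Fp (k ^ 2) γ rs c = 1)
          (Rc k u.2.1 - 1) with hc₁
        have hc₁P : Fp (k ^ 2) γ rs c₁ = 1 := by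
          rw [hc₁]
          exact Nat.findGreatest_spec (P := fun c => Fp (k ^ 2) γ rs c = 1)
            (m := cs) (n := Rc k u.2.1 - 1) (by omega) f5
        have hc₁ge : cs ≤ c₁ := by
          rw [hc₁]
          exact Nat.le_findGreatest (P := fun c => Fp (k ^ 2) γ rs c = 1)
            (by omega) f5
        have hc₁le : c₁ ≤ Rc k u.2.1 - 1 := by
          rw [hc₁]
          exact Nat.findGreatest_le (P := fun c => Fp (k ^ 2) γ rs c = 1) _
        have hRj : k + 1 ≤ Rc k u.2.1 := by
          have := Rc_gap k (show 0 < u.2.1 from hj1)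
          simpa [Rc] using this
        set d := rs - Rc k u.1.1 with hd
        set w := Rc k u.2.1 - c₁ with hw
        set m := k - d with hm
        have hd1 : 1 ≤ d := by omega
        have hdk : d + 1 ≤ k := by omega
        have hw1 : 1 ≤ w := by omega
        have hm1 : 1 ≤ m := by omega
        have hcw : c₁ + w = Rc k u.2.1 := by omega
        have hdm : d + 1 + m = k + 1 := by omega
        have had : Rc k u.1.1 + d = rs := by omega
        obtain ⟨Q, q1, q2, q3, q4, q5⟩ := bump_path (k ^ 2) γ
          (Rc k u.1.1) c₁ d w m hd1 hw1 hm1 (by omega) (by omega)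
        refine ⟨Q, u, v, he, ?_, ?_, Or.inr ⟨hst, ?_, ?_⟩⟩
        · have g1 : Q.first = φV u := coordOf_inj (by
            rw [q1, hco u, Prod.mk.injEq]
            omega)
          have g2 : Q.last = φV v := coordOf_inj (by
            rw [q2, hco v, Prod.mk.injEq, e1, e2]
            omega)
          rw [g1, g2]
        · rw [q3, hdm, hcw, had]
          have hzero : ∀ t ∈ range w, t ≠ 0 → Fp (k ^ 2) γ rs (c₁ + t) = 0 := by
            intro t ht hne
            have htw := Finset.mem_range.mp ht
            have hng := Nat.findGreatest_is_greatest
              (show c₁ < c₁ + t by omega) (show c₁ + t ≤ Rc k u.2.1 - 1 by omega)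
            rcases zmod2_cases (Fp (k ^ 2) γ rs (c₁ + t)) with h0 | h0
            · exact h0
            · exact absurd h0 hng
          have hFs : ∑ t ∈ range w, Fp (k ^ 2) γ rs (c₁ + t) = 1 := by
            rw [Finset.sum_eq_single_of_mem 0
              (Finset.mem_range.mpr (show 0 < w by omega)) hzero, Nat.add_zero]
            exact hc₁P
          rw [hFs]
          exact zmod2_ne _ _ hSV
        · intro x hx
          simp only [openV, coordOf, Set.mem_setOf_eq]
          rcases q4 x hx with ⟨g1, g2, g3⟩ | ⟨g1, g2, g3, g4⟩
          · exact ⟨by omega, by omega, by omega, by omega⟩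
          · exact ⟨by omega, by omega, by omega, by omega⟩
        · intro x hx
          simp only [closedV, openV, coordOf, Set.mem_setOf_eq]
          rcases q5 x hx with ⟨g1, g2, g3⟩ | ⟨g1, g2, g3, g4⟩
          · exact Or.inl ⟨by omega, by omega, by omega⟩
          · exact Or.inr ⟨by omega, by omega, by omega, by omega⟩
  choose P fu fv he hQend hQpar hreg using hP
  apply assemble k (k ^ 2) γ (σB k γ) φV
  · intro u u' h
    have h2 := congrArg coordOf h
    rw [hco, hco, Prod.mk.injEq] at h2
    exact vtx_of_coords (Rc_inj k h2.1) (Rc_inj k h2.2)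
  · intro e u v hev
    have hee : s(u, v) = s(fu e, fv e) := by rw [← hev]; exact he e
    rcases sym2_cases hee with ⟨rfl, rfl⟩ | ⟨rfl, rfl⟩
    · exact hQend e
    · rw [hQend e]; exact Sym2.eq_swap
  · intro e u v hev
    have hee : s(u, v) = s(fu e, fv e) := by rw [← hev]; exact he e
    rcases sym2_cases hee with ⟨rfl, rfl⟩ | ⟨rfl, rfl⟩
    · exact hQpar e
    · rw [hQpar e]; exact add_comm _ _
  · intro e e' hne
    rw [Set.disjoint_left]
    intro x hx hx'
    have hdet : ¬(fu e = fu e' ∧ (hstep (fu e) (fv e) ∧ hstep (fu e') (fv e')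
        ∨ vstep (fu e) (fv e) ∧ vstep (fu e') (fv e'))) := by
      rintro ⟨h1, ⟨hs1, hs2⟩ | ⟨hs1, hs2⟩⟩
      · apply hne
        apply Subtype.ext
        have hv : fv e = fv e' :=
          hstep_det (show hstep (fu e') (fv e) by rw [← h1]; exact hs1) hs2
        rw [he e, he e', h1, hv]
      · apply hne
        apply Subtype.ext
        have hv : fv e = fv e' :=
          vstep_det (show vstep (fu e') (fv e) by rw [← h1]; exact hs1) hs2
        rw [he e, he e', h1, hv]
    rcases hreg e with ⟨hs1, ho1, _⟩ | ⟨hs1, ho1, _⟩ <;>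
      rcases hreg e' with ⟨hs2, _, hc2⟩ | ⟨hs2, _, hc2⟩
    · refine regionHH k (fun _ => trivial) ?_ (ho1 x hx) (hc2 x hx')
      rintro ⟨hi, hj⟩
      exact hdet ⟨vtx_of_coords hi hj, Or.inl ⟨hs1, hs2⟩⟩
    · exact regionHV k (ho1 x hx) (hc2 x hx')
    · exact regionVH k (ho1 x hx) (hc2 x hx')
    · refine regionVV k ?_ (ho1 x hx) (hc2 x hx')
      rintro ⟨hi, hj⟩
      exact hdet ⟨vtx_of_coords hi hj, Or.inr ⟨hs1, hs2⟩⟩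
  · intro e
    rw [Set.disjoint_left]
    intro x hx hx'
    obtain ⟨u', hu'⟩ := hx'
    have hx2 : coordOf x = (Rc k u'.1.1, Rc k u'.2.1) := by
      rw [← hu']
      exact hco u'
    rcases hreg e with ⟨hs1, ho1, _⟩ | ⟨hs1, ho1, _⟩
    · exact regionHPhi k (ho1 x hx) hx2
    · exact regionVPhi k (ho1 x hx) hx2

end CaseB

end S3

/-- Any signing of the `k² × k²` grid contains the all-even
`k × k` grid as a subdivision. -/
theorem statement_3 (k : ℕ) (γ : (gridGraph (k ^ 2)).E → ZMod 2) :
    IsSignedSubdivision (gridGraph k) (γ₀ (gridGraph k)) (gridGraph (k ^ 2)) γ := by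
  rcases le_or_gt k 1 with hk | hk
  · exact S3.trivial_case k hk γ
  · have hk2 : 2 ≤ k := hk
    by_cases hA : ∃ i j, i + 2 ≤ k ∧ 1 ≤ j ∧ j < k ∧ ∀ r c,
        S3.Rc k i + 1 ≤ r → r + 1 ≤ S3.Rc k i + k → S3.Rc k j + 1 ≤ c + k →
        c + 1 ≤ S3.Rc k j → S3.Fp (k ^ 2) γ r c = 0
    · obtain ⟨i, j, hi, hj1, hj2, hev⟩ := hA
      have hbi := S3.Rc_bound k hk2 (show i + 1 < k by omega)
      have hbj := S3.Rc_bound k hk2 hj2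
      have hRsi : S3.Rc k (i + 1) = S3.Rc k i + (k + 1) := S3.Rc_succ k i
      have hRj : k + 1 ≤ S3.Rc k j := by
        have := S3.Rc_gap k (show 0 < j from hj1)
        simpa [S3.Rc] using this
      apply S3.caseA k γ (S3.Rc k i + 1) (S3.Rc k j + 1 - k) hk2
        (by omega) (by omega)
      intro r c h1 h2 h3 h4
      exact hev r c (by omega) (by omega) (by omega) (by omega)
    · push_neg at hA
      apply S3.caseB k γ hk2
      intro i j h1 h2 h3
      obtain ⟨r, c, g1, g2, g3, g4, g5⟩ := hA i j (by omega) h2 h3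
      refine ⟨r, c, g1, g2, g3, g4, ?_⟩
      rcases S3.zmod2_cases (S3.Fp (k ^ 2) γ r c) with h | h
      · exact absurd h g5
      · exact h

end TDMPaper
end

section
/- For any γ: (1) if a graph G forbids the k×k grid as a minor, then the signed graph (G,γ) forbids the k×k even grid (the k×k grid with all edges labeled 0) as a signed graph minor; (2) conversely, if (G,γ) forbids the k×k even grid as a signed graph minor, then G forbids the k²×k² grid as a minor. -/
namespace TDMPaper

open MGraph

/-! ## Auxiliary machinery for Statement 4 -/

section Statement4Aux

open Classical

lemma zmod2_add_self (a : ZMod 2) : a + a = 0 := by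
  fin_cases a <;> decide

/-- The signing obtained from `γ` by shifting with potential `σ`. -/
noncomputable def shiftSign (G : MGraph) (γ : G.E → ZMod 2) (σ : G.V → ZMod 2) :
    G.E → ZMod 2 :=
  fun e => γ e + σ (G.ep1 e) + σ (G.ep2 e)

lemma shiftSign_eq {G : MGraph} (γ : G.E → ZMod 2) (σ : G.V → ZMod 2) {e : G.E}
    {u v : G.V} (h : G.ends e = s(u, v)) :
    shiftSign G γ σ e = γ e + σ u + σ v := by
  have h2 := G.ends_ep e
  rw [h] at h2
  rw [Sym2.eq_iff] at h2
  unfold shiftSign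
  rcases h2 with ⟨h3, h4⟩ | ⟨h3, h4⟩ <;> rw [← h3, ← h4] <;> ring

lemma shiftSign_isShift (G : MGraph) (γ : G.E → ZMod 2) (σ : G.V → ZMod 2) :
    IsShift G γ (shiftSign G γ σ) :=
  ⟨σ, fun _ _ _ h => shiftSign_eq γ σ h⟩

/-- Plain connectivity relation within a set. -/
def connRel (G : MGraph) (B : Set G.V) (x y : G.V) : Prop :=
  x ∈ B ∧ y ∈ B ∧ ∃ e, G.ends e = s(x, y)

/-- Connectivity through `τ`-even edges within a set. -/
def evenRel (G : MGraph) (γ : G.E → ZMod 2) (τ : G.V → ZMod 2) (B : Set G.V)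
    (x y : G.V) : Prop :=
  x ∈ B ∧ y ∈ B ∧ ∃ e, G.ends e = s(x, y) ∧ γ e + τ x + τ y = 0

lemma evenRel_symm (G : MGraph) (γ : G.E → ZMod 2) (τ : G.V → ZMod 2) (B : Set G.V) :
    Symmetric (evenRel G γ τ B) := by
  rintro x y ⟨hx, hy, e, he, hpar⟩
  exact ⟨hy, hx, e, by rw [he, Sym2.eq_swap], by rw [← hpar]; ring⟩

lemma boundary_step {G : MGraph} {B S : Set G.V} {r z : G.V}
    (hr : r ∈ S) (hz : z ∉ S) (h : Relation.ReflTransGen (connRel G B) r z) :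
    ∃ x ∈ S, ∃ y, y ∈ B ∧ y ∉ S ∧ ∃ e, G.ends e = s(x, y) := by
  revert hz
  induction h with
  | refl => intro hz; exact absurd hr hz
  | @tail b c hab hbc ih =>
    intro hz
    by_cases hb : b ∈ S
    · exact ⟨b, hb, c, hbc.2.1, hz, hbc.2.2⟩
    · exact ih hb

lemma tep_aux (G : MGraph) (γ : G.E → ZMod 2) (B : Set G.V) (root : G.V)
    (hrootB : root ∈ B)
    (hconn : ∀ a ∈ B, ∀ b ∈ B, Relation.ReflTransGen (connRel G B) a b) :
    ∀ m (S : Set G.V), root ∈ S → S ⊆ B → (B \ S).ncard ≤ m →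
      (∃ τ, ∀ x ∈ S, Relation.ReflTransGen (evenRel G γ τ S) root x) →
      ∃ τ, ∀ x ∈ B, Relation.ReflTransGen (evenRel G γ τ B) root x := by
  intro m
  induction m with
  | zero =>
    intro S hrS hSB hcard ⟨τ, hτ⟩
    have hempty : B \ S = ∅ := by
      have : (B \ S).Finite := Set.toFinite _
      rwa [Nat.le_zero, Set.ncard_eq_zero this] at hcard
    have hSeq : S = B := by
      apply Set.Subset.antisymm hSB
      intro x hx
      by_contra hxS
      exact absurd (Set.mem_diff_of_mem hx hxS) (by rw [hempty]; exact Set.notMem_empty x)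
    subst hSeq
    exact ⟨τ, hτ⟩
  | succ m ih =>
    intro S hrS hSB hcard ⟨τ, hτ⟩
    by_cases hBS : B ⊆ S
    · have hSeq : S = B := Set.Subset.antisymm hSB hBS
      subst hSeq
      exact ⟨τ, hτ⟩
    · obtain ⟨z, hzB, hzS⟩ := Set.not_subset.mp hBS
      obtain ⟨x, hxS, y, hyB, hyS, e, he⟩ :=
        boundary_step hrS hzS (hconn root hrootB z hzB)
      set τ' := Function.update τ y (γ e + τ x) with hτ'def
      have hτ'S : ∀ w ∈ S, τ' w = τ w := by
        intro w hw
        apply Function.update_of_ne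
        intro hwy; subst hwy; exact hyS hw
      have hmono : ∀ a b, evenRel G γ τ S a b → evenRel G γ τ' (insert y S) a b := by
        rintro a b ⟨ha, hb, e', he', hpar⟩
        exact ⟨Set.mem_insert_of_mem _ ha, Set.mem_insert_of_mem _ hb, e', he',
          by rw [hτ'S a ha, hτ'S b hb]; exact hpar⟩
      have hreach : ∀ w ∈ insert y S,
          Relation.ReflTransGen (evenRel G γ τ' (insert y S)) root w := by
        intro w hw
        rcases Set.mem_insert_iff.mp hw with hwy | hwS
        · subst hwy
          refine Relation.ReflTransGen.tail
            (Relation.ReflTransGen.mono hmono _ _ (hτ x hxS)) ?_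
          refine ⟨Set.mem_insert_of_mem _ hxS, Set.mem_insert _ _, e, he, ?_⟩
          rw [hτ'S x hxS, hτ'def, Function.update_self]
          have h22 : ∀ a b : ZMod 2, a + b + (a + b) = 0 := by decide
          exact h22 _ _
        · exact Relation.ReflTransGen.mono hmono _ _ (hτ w hwS)
      refine ih (insert y S) (Set.mem_insert_of_mem _ hrS)
        (Set.insert_subset hyB hSB) ?_ ⟨τ', hreach⟩
      have hlt : (B \ insert y S).ncard < (B \ S).ncard := by
        have h1 : B \ insert y S = (B \ S) \ {y} := by
          ext w; simp [Set.mem_diff, Set.mem_insert_iff]; tauto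
        rw [h1]
        exact Set.ncard_diff_singleton_lt_of_mem ⟨hyB, hyS⟩ (Set.toFinite _)
      omega

lemma tep (G : MGraph) (γ : G.E → ZMod 2) (B : Set G.V) (root : G.V)
    (hrootB : root ∈ B)
    (hconn : ∀ a ∈ B, ∀ b ∈ B, Relation.ReflTransGen (connRel G B) a b) :
    ∃ τ, ∀ a ∈ B, ∀ b ∈ B, Relation.ReflTransGen (evenRel G γ τ B) a b := by
  obtain ⟨τ, hτ⟩ := tep_aux G γ B root hrootB hconn (B \ {root}).ncard {root}
    rfl (Set.singleton_subset_iff.mpr hrootB) (le_refl _)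
    ⟨fun _ => 0, by rintro x rfl; exact Relation.ReflTransGen.refl⟩
  refine ⟨τ, fun a ha b hb => Relation.ReflTransGen.trans ?_ (hτ b hb)⟩
  haveI : Std.Symm (evenRel G γ τ B) := ⟨fun a b h => evenRel_symm G γ τ B h⟩
  exact Std.Symm.symm _ _ (hτ a ha)

end Statement4Aux


section Compose

open Classical

lemma compose_minor_signed {H G : MGraph} (γ : G.E → ZMod 2) (M : MinorModel H G)
    (K : MGraph) (γK : K.E → ZMod 2) :
    ∃ γh : H.E → ZMod 2, (IsSignedMinor K γK H γh → IsSignedMinor K γK G γ) := by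
  -- potentials on branch sets
  have hBu : ∀ {x : G.V} {b b' : H.V}, x ∈ M.bs b → x ∈ M.bs b' → b = b' := by
    intro x b b' hb hb'
    by_contra hne
    exact Set.disjoint_left.mp (M.bs_disjoint b b' hne) hb hb'
  have htep : ∀ b : H.V, ∃ τ, ∀ a ∈ M.bs b, ∀ c ∈ M.bs b,
      Relation.ReflTransGen (evenRel G γ τ (M.bs b)) a c := by
    intro b
    exact tep G γ (M.bs b) (M.bs_nonempty b).choose (M.bs_nonempty b).choose_spec
      (fun a ha c hc => M.bs_connected b a ha c hc)
  choose τ hτ using htep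
  set τg : G.V → ZMod 2 :=
    fun x => if h : ∃ b, x ∈ M.bs b then τ h.choose x else 0 with hτgdef
  have hτg : ∀ {x : G.V} {b : H.V}, x ∈ M.bs b → τg x = τ b x := by
    intro x b hb
    have hex : ∃ b', x ∈ M.bs b' := ⟨b, hb⟩
    have : hex.choose = b := hBu hex.choose_spec hb
    simp only [hτgdef, dif_pos hex, this]
  refine ⟨shiftSign G γ τg ∘ M.em, ?_⟩
  rintro ⟨S⟩
  obtain ⟨σH, hσH⟩ := S.shift
  set σG : G.V → ZMod 2 :=
    fun x => if h : ∃ b, x ∈ M.bs b then τ h.choose x + σH h.choose else 0 with hσGdef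
  have hσG : ∀ {x : G.V} {b : H.V}, x ∈ M.bs b → σG x = τ b x + σH b := by
    intro x b hb
    have hex : ∃ b', x ∈ M.bs b' := ⟨b, hb⟩
    have : hex.choose = b := hBu hex.choose_spec hb
    simp only [hσGdef, dif_pos hex, this]
  -- parity of model edges
  have emlift : ∀ (eH : H.E) (u v : H.V), H.ends eH = s(u, v) →
      shiftSign G γ σG (M.em eH) = S.γ' eH := by
    intro eH u v h
    obtain ⟨a, ha, c, hc, hGends⟩ := M.em_ends eH u v h
    rw [shiftSign_eq γ σG hGends, hσG ha, hσG hc, hσH eH u v h,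
      Function.comp_apply, shiftSign_eq γ τg (G.ends_ep (M.em eH))]
    have h2 := G.ends_ep (M.em eH)
    rw [hGends, Sym2.eq_iff] at h2
    have hab : τg (G.ep1 (M.em eH)) + τg (G.ep2 (M.em eH)) = τ u a + τ v c := by
      rcases h2 with ⟨h3, h4⟩ | ⟨h3, h4⟩
      · rw [← h3, ← h4, hτg ha, hτg hc]
      · rw [← h3, ← h4, hτg ha, hτg hc]; ring
    -- goal: γ (M.em eH) + (τ u a + σH u) + (τ v c + σH v)
    --     = γ (M.em eH) + τg ep1 + τg ep2 + σH u + σH v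
    rw [show γ (M.em eH) + τg (G.ep1 (M.em eH)) + τg (G.ep2 (M.em eH)) + σH u + σH v
        = γ (M.em eH) + (τg (G.ep1 (M.em eH)) + τg (G.ep2 (M.em eH))) + σH u + σH v by ring,
      hab]
    ring
  -- intra-branch even connectivity (in terms of the final relation)
  refine ⟨{
    γ' := shiftSign G γ σG
    shift := shiftSign_isShift G γ σG
    bs := fun v => ⋃ b ∈ S.bs v, M.bs b
    em := M.em ∘ S.em
    bs_nonempty := ?_
    bs_disjoint := ?_
    bs_connected := ?_
    em_inj := M.em_inj.comp S.em_inj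
    em_ends := ?_
    em_parity := ?_ }⟩
  · intro v
    obtain ⟨b, hb⟩ := S.bs_nonempty v
    obtain ⟨x, hx⟩ := M.bs_nonempty b
    exact ⟨x, Set.mem_biUnion hb hx⟩
  · intro u v huv
    rw [Set.disjoint_left]
    rintro x hxu hxv
    obtain ⟨b1, hb1, hx1⟩ := Set.mem_iUnion₂.mp hxu
    obtain ⟨b2, hb2, hx2⟩ := Set.mem_iUnion₂.mp hxv
    have : b1 = b2 := hBu hx1 hx2
    subst this
    exact Set.disjoint_left.mp (S.bs_disjoint u v huv) hb1 hb2
  · -- connectivity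
    intro v a ha c hc
    obtain ⟨b1, hb1, ha1⟩ := Set.mem_iUnion₂.mp ha
    obtain ⟨b2, hb2, hc2⟩ := Set.mem_iUnion₂.mp hc
    set RG := fun x y => x ∈ (⋃ b ∈ S.bs v, M.bs b) ∧ y ∈ (⋃ b ∈ S.bs v, M.bs b) ∧
      ∃ e, shiftSign G γ σG e = 0 ∧ G.ends e = s(x, y) with hRGdef
    have intra : ∀ b, b ∈ S.bs v → ∀ x ∈ M.bs b, ∀ y ∈ M.bs b,
        Relation.ReflTransGen RG x y := by
      intro b hb x hx y hy
      refine Relation.ReflTransGen.mono ?_ _ _ (hτ b x hx y hy)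
      rintro p q ⟨hp, hq, e, he, hpar⟩
      refine ⟨Set.mem_biUnion hb hp, Set.mem_biUnion hb hq, e, ?_, he⟩
      rw [shiftSign_eq γ σG he, hσG hp, hσG hq,
        show γ e + (τ b p + σH b) + (τ b q + σH b)
          = (γ e + τ b p + τ b q) + (σH b + σH b) by ring, hpar, zmod2_add_self,
        add_zero]
    have main : ∀ b2', Relation.ReflTransGen
        (fun x y => x ∈ S.bs v ∧ y ∈ S.bs v ∧
          ∃ e, S.γ' e = 0 ∧ H.ends e = s(x, y)) b1 b2' →
        ∀ y ∈ M.bs b2', Relation.ReflTransGen RG a y := by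
      intro b2' hrtg
      induction hrtg with
      | refl => exact fun y hy => intra b1 hb1 a ha1 y hy
      | @tail bm bn hab hbc ih =>
        intro y hy
        obtain ⟨hbm, hbn, eH, hpar0, hends⟩ := hbc
        obtain ⟨p, hp, q, hq, hGends⟩ := M.em_ends eH bm bn hends
        have hstep : RG p q := by
          refine ⟨Set.mem_biUnion hbm hp, Set.mem_biUnion hbn hq, M.em eH, ?_, hGends⟩
          rw [emlift eH bm bn hends, hpar0]
        exact ((ih p hp).tail hstep).trans (intra bn hbn q hq y hy)
    exact main b2 (S.bs_connected v b1 hb1 b2 hb2) c hc2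
  · -- em_ends
    intro eK u v h
    obtain ⟨b1, hb1, b2, hb2, hHends⟩ := S.em_ends eK u v h
    obtain ⟨p, hp, q, hq, hGends⟩ := M.em_ends (S.em eK) b1 b2 hHends
    exact ⟨p, Set.mem_biUnion hb1 hp, q, Set.mem_biUnion hb2 hq, hGends⟩
  · -- em_parity
    intro eK
    rw [Function.comp_apply, emlift (S.em eK) _ _ (H.ends_ep (S.em eK)),
      S.em_parity eK]

end Compose



section CoreGrid

open Classical Finset

lemma z2_aa (a : ZMod 2) : a + a = 0 := by fin_cases a <;> decide

lemma z2_h1 : ∀ a b c d e : ZMod 2, a + (b + c) + (d + (c + e)) = a + e + b + d := by decide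

lemma lt_sq1 (k a b : ℕ) (ha : a + 1 ≤ k) (hb : b < k) : a * k + b < k ^ 2 := by
  have h1 : (a + 1) * k ≤ k * k := Nat.mul_le_mul ha (le_refl k)
  have h3 : (a + 1) * k = a * k + k := by ring
  have h2 : k ^ 2 = k * k := pow_two k
  omega

lemma le_sq1 (k a : ℕ) (ha : a ≤ k) : a * k ≤ k ^ 2 := by
  have h1 : a * k ≤ k * k := Nat.mul_le_mul ha (le_refl k)
  have h2 : k ^ 2 = k * k := pow_two k
  omega

/-- vertex of the `k² × k²` grid -/
def gv (k x y : ℕ) (hx : x < k ^ 2) (hy : y < k ^ 2) : (gridGraph (k ^ 2)).V :=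
  (⟨x, hx⟩, ⟨y, hy⟩)

/-- horizontal edge -/
def mkHE (k x y : ℕ) (hx : x < k ^ 2) (hy : y + 1 < k ^ 2) : (gridGraph (k ^ 2)).E :=
  ⟨s(gv k x y hx (by omega), gv k x (y + 1) hx hy),
    gv k x y hx (by omega), gv k x (y + 1) hx hy, Or.inl ⟨rfl, Or.inl rfl⟩, rfl⟩

/-- vertical edge -/
def mkVE (k x y : ℕ) (hx : x + 1 < k ^ 2) (hy : y < k ^ 2) : (gridGraph (k ^ 2)).E :=
  ⟨s(gv k x y (by omega) hy, gv k (x + 1) y hx hy),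
    gv k x y (by omega) hy, gv k (x + 1) y hx hy, Or.inr ⟨rfl, Or.inl rfl⟩, rfl⟩

variable (k : ℕ) (γh : (gridGraph (k ^ 2)).E → ZMod 2)

/-- value of the horizontal edge at `(x, y)-(x, y+1)` (0 outside the grid) -/
noncomputable def cHv (x y : ℕ) : ZMod 2 :=
  if h : x < k ^ 2 ∧ y + 1 < k ^ 2 then γh (mkHE k x y h.1 h.2) else 0

/-- value of the vertical edge at `(x, y)-(x+1, y)` (0 outside the grid) -/
noncomputable def cVv (x y : ℕ) : ZMod 2 :=
  if h : x + 1 < k ^ 2 ∧ y < k ^ 2 then γh (mkVE k x y h.1 h.2) else 0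

/-- canonical normalizing potential -/
noncomputable def sig0 : (gridGraph (k ^ 2)).V → ZMod 2 :=
  fun p => (∑ j ∈ Finset.range p.2.1, cHv k γh p.1.1 j) +
    (∑ i ∈ Finset.range p.1.1, cVv k γh i 0)

/-- normalized value of the vertical edge at `(x, y)` -/
noncomputable def cc (x y : ℕ) : ZMod 2 :=
  cVv k γh x y + cVv k γh x 0 + (∑ j ∈ Finset.range y, cHv k γh x j) +
    (∑ j ∈ Finset.range y, cHv k γh (x + 1) j)

lemma sig0_horiz (x y : ℕ) (hx : x < k ^ 2) (hy : y + 1 < k ^ 2) :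
    γh (mkHE k x y hx hy) + sig0 k γh (gv k x y hx (by omega)) +
      sig0 k γh (gv k x (y + 1) hx hy) = 0 := by
  have hc : cHv k γh x y = γh (mkHE k x y hx hy) := by
    rw [cHv, dif_pos ⟨hx, hy⟩]
  simp only [sig0, gv]
  rw [Finset.sum_range_succ, hc]
  generalize γh (mkHE k x y hx hy) = a
  generalize (∑ j ∈ Finset.range y, cHv k γh x j) = b
  generalize (∑ i ∈ Finset.range x, cVv k γh i 0) = d
  have : ∀ a b d : ZMod 2, a + (b + d) + (b + a + d) = 0 := by decide
  exact this a b d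

lemma sig0_vert (x y : ℕ) (hx : x + 1 < k ^ 2) (hy : y < k ^ 2) :
    γh (mkVE k x y hx hy) + sig0 k γh (gv k x y (by omega) hy) +
      sig0 k γh (gv k (x + 1) y hx hy) = cc k γh x y := by
  have hc : cVv k γh x y = γh (mkVE k x y hx hy) := by
    rw [cVv, dif_pos ⟨hx, hy⟩]
  simp only [sig0, gv, cc]
  rw [Finset.sum_range_succ (fun i => cVv k γh i 0) x, ← hc]
  generalize cVv k γh x y = a
  generalize cVv k γh x 0 = c0
  generalize (∑ j ∈ Finset.range y, cHv k γh x j) = b1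
  generalize (∑ j ∈ Finset.range y, cHv k γh (x+1) j) = b2
  generalize (∑ i ∈ Finset.range x, cVv k γh i 0) = d
  have : ∀ a c0 b1 b2 d : ZMod 2, a + (b1 + d) + (b2 + (d + c0)) = a + c0 + b1 + b2 := by
    decide
  exact this a c0 b1 b2 d

lemma cc_zero (x : ℕ) : cc k γh x 0 = 0 := by
  simp only [cc, Finset.range_zero, Finset.sum_empty, add_zero]
  exact z2_aa _


/-! ### Edge decomposition helpers -/

lemma Vext {n : ℕ} {p q : (gridGraph n).V} (h1 : p.1.1 = q.1.1) (h2 : p.2.1 = q.2.1) :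
    p = q := Prod.ext (Fin.ext h1) (Fin.ext h2)

lemma Vexteq {n : ℕ} {p q : (gridGraph n).V} (h : p = q) :
    p.1.1 = q.1.1 ∧ p.2.1 = q.2.1 := by subst h; exact ⟨rfl, rfl⟩

noncomputable def ecA {k : ℕ} (e : (gridGraph k).E) : Fin k × Fin k := e.2.choose

noncomputable def ecB {k : ℕ} (e : (gridGraph k).E) : Fin k × Fin k :=
  e.2.choose_spec.choose

lemma ec_spec {k : ℕ} (e : (gridGraph k).E) :
    gridAdj ((ecA e).1.1, (ecA e).2.1) ((ecB e).1.1, (ecB e).2.1) ∧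
      e.1 = s(ecA e, ecB e) :=
  e.2.choose_spec.choose_spec

/-! ### Case A: an all-even window -/

/-- vertex map for Case A -/
def gvA (k x0 y0 : ℕ) (hx0 : x0 + k ≤ k ^ 2) (hy0 : y0 + k ≤ k ^ 2)
    (u : Fin k × Fin k) : (gridGraph (k ^ 2)).V :=
  (⟨x0 + u.1.1, by have := u.1.2; omega⟩, ⟨y0 + u.2.1, by have := u.2.2; omega⟩)

lemma gvA_inj (k x0 y0 : ℕ) (hx0 : x0 + k ≤ k ^ 2) (hy0 : y0 + k ≤ k ^ 2) :
    Function.Injective (gvA k x0 y0 hx0 hy0) := by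
  intro u v h
  obtain ⟨h1, h2⟩ := Vexteq h
  simp only [gvA] at h1 h2
  exact Prod.ext (Fin.ext (by omega)) (Fin.ext (by omega))

/-- edge map for Case A -/
noncomputable def emA (k x0 y0 : ℕ) (hx0 : x0 + k ≤ k ^ 2) (hy0 : y0 + k ≤ k ^ 2)
    (e : (gridGraph k).E) : (gridGraph (k ^ 2)).E :=
  if h : (ecA e).1.1 = (ecB e).1.1 then
    mkHE k (x0 + (ecA e).1.1) (y0 + min (ecA e).2.1 (ecB e).2.1)
      (by have := (ecA e).1.2; omega)
      (by
        have hs := (ec_spec e).1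
        have h1 := (ecA e).2.2
        have h2 := (ecB e).2.2
        simp only [gridAdj] at hs
        omega)
  else
    mkVE k (x0 + min (ecA e).1.1 (ecB e).1.1) (y0 + (ecA e).2.1)
      (by
        have hs := (ec_spec e).1
        have h1 := (ecA e).1.2
        have h2 := (ecB e).1.2
        simp only [gridAdj] at hs
        omega)
      (by have := (ecA e).2.2; omega)

lemma emA_ends (k x0 y0 : ℕ) (hx0 : x0 + k ≤ k ^ 2) (hy0 : y0 + k ≤ k ^ 2)
    (e : (gridGraph k).E) :
    (gridGraph (k ^ 2)).ends (emA k x0 y0 hx0 hy0 e) =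
      Sym2.map (gvA k x0 y0 hx0 hy0) e.1 := by
  have hs := (ec_spec e).1
  have hval := (ec_spec e).2
  have hb1 := (ecA e).1.2
  have hb2 := (ecA e).2.2
  have hb3 := (ecB e).1.2
  have hb4 := (ecB e).2.2
  rw [hval, Sym2.map_pair_eq]
  simp only [gridAdj] at hs
  unfold emA
  by_cases h : (ecA e).1.1 = (ecB e).1.1
  · rw [dif_pos h]
    show s(gv k _ _ _ _, gv k _ _ _ _) = _
    rcases hs with ⟨h1, h2 | h2⟩ | ⟨h1, h2 | h2⟩
    · rw [show gv k (x0 + (ecA e).1.1) (y0 + min (ecA e).2.1 (ecB e).2.1) (by omega) (by omega)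
          = gvA k x0 y0 hx0 hy0 (ecA e) from Vext (by simp only [gv, gvA]; try omega) (by simp only [gv, gvA]; try omega),
        show gv k (x0 + (ecA e).1.1) (y0 + min (ecA e).2.1 (ecB e).2.1 + 1) (by omega) (by omega)
          = gvA k x0 y0 hx0 hy0 (ecB e) from Vext (by simp only [gv, gvA]; try omega) (by simp only [gv, gvA]; try omega)]
    · rw [show gv k (x0 + (ecA e).1.1) (y0 + min (ecA e).2.1 (ecB e).2.1) (by omega) (by omega)
          = gvA k x0 y0 hx0 hy0 (ecB e) from Vext (by simp only [gv, gvA]; try omega) (by simp only [gv, gvA]; try omega),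
        show gv k (x0 + (ecA e).1.1) (y0 + min (ecA e).2.1 (ecB e).2.1 + 1) (by omega) (by omega)
          = gvA k x0 y0 hx0 hy0 (ecA e) from Vext (by simp only [gv, gvA]; try omega) (by simp only [gv, gvA]; try omega),
        Sym2.eq_swap]
    · omega
    · omega
  · rw [dif_neg h]
    show s(gv k _ _ _ _, gv k _ _ _ _) = _
    rcases hs with ⟨h1, h2 | h2⟩ | ⟨h1, h2 | h2⟩
    · omega
    · omega
    · rw [show gv k (x0 + min (ecA e).1.1 (ecB e).1.1) (y0 + (ecA e).2.1) (by omega) (by omega)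
          = gvA k x0 y0 hx0 hy0 (ecA e) from Vext (by simp only [gv, gvA]; try omega) (by simp only [gv, gvA]; try omega),
        show gv k (x0 + min (ecA e).1.1 (ecB e).1.1 + 1) (y0 + (ecA e).2.1) (by omega) (by omega)
          = gvA k x0 y0 hx0 hy0 (ecB e) from Vext (by simp only [gv, gvA]; try omega) (by simp only [gv, gvA]; try omega)]
    · rw [show gv k (x0 + min (ecA e).1.1 (ecB e).1.1) (y0 + (ecA e).2.1) (by omega) (by omega)
          = gvA k x0 y0 hx0 hy0 (ecB e) from Vext (by simp only [gv, gvA]; try omega) (by simp only [gv, gvA]; try omega),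
        show gv k (x0 + min (ecA e).1.1 (ecB e).1.1 + 1) (y0 + (ecA e).2.1) (by omega) (by omega)
          = gvA k x0 y0 hx0 hy0 (ecA e) from Vext (by simp only [gv, gvA]; try omega) (by simp only [gv, gvA]; try omega),
        Sym2.eq_swap]


/-- row-shift potential for Case A -/
noncomputable def rhoA (k : ℕ) (γh : (gridGraph (k ^ 2)).E → ZMod 2) (x0 y0 : ℕ) :
    (gridGraph (k ^ 2)).V → ZMod 2 :=
  fun p => if x0 ≤ p.1.1 ∧ p.1.1 < x0 + k ∧ y0 ≤ p.2.1 ∧ p.2.1 < y0 + k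
    then ∑ x' ∈ Finset.Ico x0 p.1.1, cc k γh x' y0 else 0

noncomputable def sigA (k : ℕ) (γh : (gridGraph (k ^ 2)).E → ZMod 2) (x0 y0 : ℕ) :
    (gridGraph (k ^ 2)).V → ZMod 2 :=
  fun p => sig0 k γh p + rhoA k γh x0 y0 p

lemma ccConstA (k : ℕ) (γh : (gridGraph (k ^ 2)).E → ZMod 2) (x0 y0 : ℕ)
    (hwin : ∀ x y, x0 ≤ x → x + 1 < x0 + k → y0 ≤ y → y + 1 < y0 + k →
      cc k γh x y = cc k γh x (y + 1))
    (x y : ℕ) (hx1 : x0 ≤ x) (hx2 : x + 1 < x0 + k) (hy1 : y0 ≤ y) (hy2 : y < y0 + k) :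
    cc k γh x y = cc k γh x y0 := by
  have key : ∀ d, y0 + d < y0 + k → cc k γh x (y0 + d) = cc k γh x y0 := by
    intro d
    induction d with
    | zero => intro _; rfl
    | succ n ih =>
      intro hd
      rw [show y0 + (n + 1) = (y0 + n) + 1 from rfl,
        ← hwin x (y0 + n) hx1 hx2 (by omega) (by omega)]
      exact ih (by omega)
  have hy : y0 + (y - y0) = y := by omega
  rw [← hy]
  exact key (y - y0) (by omega)

lemma parityA_H (k : ℕ) (γh : (gridGraph (k ^ 2)).E → ZMod 2) (x0 y0 : ℕ)
    (x y : ℕ) (hx1 : x0 ≤ x) (hx2 : x < x0 + k) (hy1 : y0 ≤ y) (hy2 : y + 1 < y0 + k)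
    (h1 : x < k ^ 2) (h2 : y + 1 < k ^ 2) :
    shiftSign (gridGraph (k ^ 2)) γh (sigA k γh x0 y0) (mkHE k x y h1 h2) = 0 := by
  rw [shiftSign_eq γh _ (rfl :
    (gridGraph (k ^ 2)).ends (mkHE k x y h1 h2) = s(gv k x y h1 (by omega), gv k x (y + 1) h1 h2))]
  simp only [sigA]
  have hre : ∀ a b c d e : ZMod 2, a + (b + c) + (d + e) = (a + b + d) + (c + e) := by decide
  rw [hre, sig0_horiz k γh x y h1 h2, zero_add]
  have hu : rhoA k γh x0 y0 (gv k x y h1 (by omega)) =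
      ∑ x' ∈ Finset.Ico x0 x, cc k γh x' y0 := by
    simp only [rhoA, gv]
    exact if_pos ⟨hx1, hx2, hy1, by omega⟩
  have hv : rhoA k γh x0 y0 (gv k x (y + 1) h1 h2) =
      ∑ x' ∈ Finset.Ico x0 x, cc k γh x' y0 := by
    simp only [rhoA, gv]
    exact if_pos ⟨hx1, hx2, by omega, by omega⟩
  rw [hu, hv, z2_aa]

lemma parityA_V (k : ℕ) (γh : (gridGraph (k ^ 2)).E → ZMod 2) (x0 y0 : ℕ)
    (hwin : ∀ x y, x0 ≤ x → x + 1 < x0 + k → y0 ≤ y → y + 1 < y0 + k →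
      cc k γh x y = cc k γh x (y + 1))
    (x y : ℕ) (hx1 : x0 ≤ x) (hx2 : x + 1 < x0 + k) (hy1 : y0 ≤ y) (hy2 : y < y0 + k)
    (h1 : x + 1 < k ^ 2) (h2 : y < k ^ 2) :
    shiftSign (gridGraph (k ^ 2)) γh (sigA k γh x0 y0) (mkVE k x y h1 h2) = 0 := by
  rw [shiftSign_eq γh _ (rfl :
    (gridGraph (k ^ 2)).ends (mkVE k x y h1 h2) = s(gv k x y (by omega) h2, gv k (x + 1) y h1 h2))]
  simp only [sigA]
  have hre : ∀ a b c d e : ZMod 2, a + (b + c) + (d + e) = (a + b + d) + (c + e) := by decide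
  rw [hre, sig0_vert k γh x y h1 h2]
  have hu : rhoA k γh x0 y0 (gv k x y (by omega) h2) =
      ∑ x' ∈ Finset.Ico x0 x, cc k γh x' y0 := by
    simp only [rhoA, gv]
    exact if_pos ⟨hx1, by omega, hy1, by omega⟩
  have hv : rhoA k γh x0 y0 (gv k (x + 1) y h1 h2) =
      (∑ x' ∈ Finset.Ico x0 x, cc k γh x' y0) + cc k γh x y0 := by
    simp only [rhoA, gv]
    exact (if_pos ⟨by omega, by omega, hy1, by omega⟩).trans (Finset.sum_Ico_succ_top hx1 _)
  rw [hu, hv]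
  have hre2 : ∀ a s c : ZMod 2, a + (s + (s + c)) = a + c := by decide
  rw [hre2, ccConstA k γh x0 y0 hwin x y hx1 hx2 hy1 hy2, z2_aa]

lemma caseA (k : ℕ) (γh : (gridGraph (k ^ 2)).E → ZMod 2) (x0 y0 : ℕ)
    (hx0 : x0 + k ≤ k ^ 2) (hy0 : y0 + k ≤ k ^ 2)
    (hwin : ∀ x y, x0 ≤ x → x + 1 < x0 + k → y0 ≤ y → y + 1 < y0 + k →
      cc k γh x y = cc k γh x (y + 1)) :
    IsSignedMinor (gridGraph k) (γ₀ (gridGraph k)) (gridGraph (k ^ 2)) γh := by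
  refine ⟨{
    γ' := shiftSign (gridGraph (k ^ 2)) γh (sigA k γh x0 y0)
    shift := shiftSign_isShift _ _ _
    bs := fun u => {gvA k x0 y0 hx0 hy0 u}
    em := emA k x0 y0 hx0 hy0
    bs_nonempty := fun v => ⟨_, rfl⟩
    bs_disjoint := ?_
    bs_connected := ?_
    em_inj := ?_
    em_ends := ?_
    em_parity := ?_ }⟩
  · intro u v huv
    rw [Set.disjoint_singleton]
    exact fun hEq => huv (gvA_inj k x0 y0 hx0 hy0 hEq)
  · intro v a ha b hb
    rw [Set.mem_singleton_iff] at ha hb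
    subst ha; subst hb
    exact Relation.ReflTransGen.refl
  · intro e e' h
    have h2 : Sym2.map (gvA k x0 y0 hx0 hy0) e.1 = Sym2.map (gvA k x0 y0 hx0 hy0) e'.1 := by
      rw [← emA_ends k x0 y0 hx0 hy0 e, ← emA_ends k x0 y0 hx0 hy0 e', h]
    exact Subtype.ext (Sym2.map.injective (gvA_inj k x0 y0 hx0 hy0) h2)
  · intro e u v h
    refine ⟨gvA k x0 y0 hx0 hy0 u, rfl, gvA k x0 y0 hx0 hy0 v, rfl, ?_⟩
    rw [emA_ends, show e.1 = s(u, v) from h]; exact Sym2.map_pair_eq _ _ _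
  · intro e
    show shiftSign (gridGraph (k ^ 2)) γh (sigA k γh x0 y0) (emA k x0 y0 hx0 hy0 e) = 0
    have hs := (ec_spec e).1
    have hb1 := (ecA e).1.2
    have hb2 := (ecA e).2.2
    have hb3 := (ecB e).1.2
    have hb4 := (ecB e).2.2
    simp only [gridAdj] at hs
    unfold emA
    by_cases h : (ecA e).1.1 = (ecB e).1.1
    · rw [dif_pos h]
      exact parityA_H k γh x0 y0 _ _ (by omega) (by omega) (by omega) (by omega) _ _
    · rw [dif_neg h]
      exact parityA_V k γh x0 y0 hwin _ _ (by omega)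
        (by rcases hs with ⟨h1, _⟩ | ⟨h1, h2 | h2⟩ <;> omega) (by omega) (by omega) _ _


/-! ### Case B: every region has an odd cell -/

lemma div_eq_of (a b i : ℕ) (h1 : i * b ≤ a) (h2 : a < i * b + b) : a / b = i := by
  refine Nat.div_eq_of_lt_le h1 ?_
  have : (i + 1) * b = i * b + b := by ring
  omega

lemma mod0_iff (a b i : ℕ) (hb : 0 < b) (h1 : i * b ≤ a) (h2 : a < i * b + b) :
    a % b = 0 ↔ a = i * b := by
  have hd := div_eq_of a b i h1 h2
  have hm := Nat.div_add_mod a b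
  rw [hd] at hm
  have : b * i = i * b := Nat.mul_comm b i
  omega

/-- chosen odd cell of region `(i, j)` -/
noncomputable def oc (k : ℕ) (γh : (gridGraph (k ^ 2)).E → ZMod 2) (i j : ℕ) : ℕ × ℕ :=
  if h : ∃ p : ℕ × ℕ, i * k ≤ p.1 ∧ p.1 + 1 < i * k + k ∧ j * k ≤ p.2 ∧
      p.2 + 1 < j * k + k ∧ cc k γh p.1 p.2 ≠ cc k γh p.1 (p.2 + 1)
    then h.choose else (i * k, j * k)

noncomputable def xh (k : ℕ) (γh : (gridGraph (k ^ 2)).E → ZMod 2) (i j : ℕ) : ℕ :=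
  min (max (oc k γh i j).1 (i * k)) (i * k + k - 2)

noncomputable def yh (k : ℕ) (γh : (gridGraph (k ^ 2)).E → ZMod 2) (i j : ℕ) : ℕ :=
  min (max (oc k γh i j).2 (j * k)) (j * k + k - 2)

lemma xh_ge (k γh i j) : i * k ≤ xh k γh i j ∨ xh k γh i j = i * k + k - 2 := by
  unfold xh; omega

lemma yh_mem (k γh i j) (hk : 2 ≤ k) : j * k ≤ yh k γh i j ∧ yh k γh i j ≤ j * k + k - 2 := by
  unfold yh; omega

lemma oc_spec (k : ℕ) (γh : (gridGraph (k ^ 2)).E → ZMod 2) (i j : ℕ)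
    (hex : ∃ p : ℕ × ℕ, i * k ≤ p.1 ∧ p.1 + 1 < i * k + k ∧ j * k ≤ p.2 ∧
      p.2 + 1 < j * k + k ∧ cc k γh p.1 p.2 ≠ cc k γh p.1 (p.2 + 1)) :
    i * k ≤ xh k γh i j ∧ xh k γh i j + 1 < i * k + k ∧ j * k ≤ yh k γh i j ∧
      yh k γh i j + 1 < j * k + k ∧
      cc k γh (xh k γh i j) (yh k γh i j) ≠ cc k γh (xh k γh i j) (yh k γh i j + 1) := by
  obtain ⟨h1, h2, h3, h4, h5⟩ := hex.choose_spec
  have hxh : xh k γh i j = hex.choose.1 := by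
    unfold xh oc; rw [dif_pos hex]; omega
  have hyh : yh k γh i j = hex.choose.2 := by
    unfold yh oc; rw [dif_pos hex]; omega
  rw [hxh, hyh]
  exact ⟨h1, by omega, h3, by omega, h5⟩

/-- connector potential -/
noncomputable def phiB (k : ℕ) (γh : (gridGraph (k ^ 2)).E → ZMod 2) (i j m : ℕ) : ZMod 2 :=
  (∑ x ∈ Finset.Ico (i * k) m, cc k γh x (yh k γh i j)) +
    ∑ x ∈ Finset.Ico m (i * k + k), cc k γh x (yh k γh i j + 1)

/-- chosen jog row -/
noncomputable def mh (k : ℕ) (γh : (gridGraph (k ^ 2)).E → ZMod 2) (i j : ℕ) : ℕ :=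
  if phiB k γh i j (xh k γh i j) = 0 then xh k γh i j else xh k γh i j + 1

lemma mh_bounds (k γh i j) (h1 : i * k ≤ xh k γh i j) (h2 : xh k γh i j + 1 < i * k + k) :
    i * k ≤ mh k γh i j ∧ mh k γh i j < i * k + k := by
  unfold mh; split <;> omega

lemma phiB_mh (k : ℕ) (γh : (gridGraph (k ^ 2)).E → ZMod 2) (i j : ℕ)
    (h1 : i * k ≤ xh k γh i j) (h2 : xh k γh i j + 1 < i * k + k)
    (hodd : cc k γh (xh k γh i j) (yh k γh i j) ≠ cc k γh (xh k γh i j) (yh k γh i j + 1)) :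
    phiB k γh i j (mh k γh i j) = 0 := by
  unfold mh
  split
  · assumption
  · rename_i hne
    have hsplit1 : phiB k γh i j (xh k γh i j + 1) =
        ((∑ x ∈ Finset.Ico (i * k) (xh k γh i j), cc k γh x (yh k γh i j)) +
          cc k γh (xh k γh i j) (yh k γh i j)) +
          ∑ x ∈ Finset.Ico (xh k γh i j + 1) (i * k + k), cc k γh x (yh k γh i j + 1) := by
      unfold phiB
      rw [Finset.sum_Ico_succ_top h1]
    have hsplit2 : phiB k γh i j (xh k γh i j) =
        (∑ x ∈ Finset.Ico (i * k) (xh k γh i j), cc k γh x (yh k γh i j)) +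
          (cc k γh (xh k γh i j) (yh k γh i j + 1) +
            ∑ x ∈ Finset.Ico (xh k γh i j + 1) (i * k + k), cc k γh x (yh k γh i j + 1)) := by
      unfold phiB
      rw [Finset.sum_eq_sum_Ico_succ_bot (by omega : xh k γh i j < i * k + k)]
    rw [hsplit1]
    rw [hsplit2] at hne
    revert hne hodd
    generalize (∑ x ∈ Finset.Ico (i * k) (xh k γh i j), cc k γh x (yh k γh i j)) = A
    generalize (∑ x ∈ Finset.Ico (xh k γh i j + 1) (i * k + k), cc k γh x (yh k γh i j + 1)) = B
    generalize cc k γh (xh k γh i j) (yh k γh i j) = c1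
    generalize cc k γh (xh k γh i j) (yh k γh i j + 1) = c2
    revert A B c1 c2
    decide

/-- branch sets for Case B -/
def BSb (k : ℕ) (γh : (gridGraph (k ^ 2)).E → ZMod 2) (v : (gridGraph k).V) :
    Set (gridGraph (k ^ 2)).V :=
  {p | (p.1.1 = v.1.1 * k ∧ v.2.1 * k ≤ p.2.1 ∧ p.2.1 < v.2.1 * k + k) ∨
       (v.1.1 + 1 < k ∧
         ((p.2.1 = yh k γh v.1.1 v.2.1 ∧ v.1.1 * k ≤ p.1.1 ∧ p.1.1 ≤ mh k γh v.1.1 v.2.1) ∨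
          (p.2.1 = yh k γh v.1.1 v.2.1 + 1 ∧ mh k γh v.1.1 v.2.1 ≤ p.1.1 ∧
            p.1.1 < v.1.1 * k + k)))}

/-- connector potential function for Case B -/
noncomputable def rhoB (k : ℕ) (γh : (gridGraph (k ^ 2)).E → ZMod 2) :
    (gridGraph (k ^ 2)).V → ZMod 2 :=
  fun p =>
    if p.1.1 % k = 0 then 0
    else
      if p.2.1 = yh k γh (p.1.1 / k) (p.2.1 / k) ∧ p.1.1 ≤ mh k γh (p.1.1 / k) (p.2.1 / k) then
        ∑ x ∈ Finset.Ico (p.1.1 / k * k) p.1.1, cc k γh x (yh k γh (p.1.1 / k) (p.2.1 / k))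
      else if p.2.1 = yh k γh (p.1.1 / k) (p.2.1 / k) + 1 ∧
          mh k γh (p.1.1 / k) (p.2.1 / k) ≤ p.1.1 then
        (∑ x ∈ Finset.Ico (p.1.1 / k * k) (mh k γh (p.1.1 / k) (p.2.1 / k)),
            cc k γh x (yh k γh (p.1.1 / k) (p.2.1 / k))) +
          ∑ x ∈ Finset.Ico (mh k γh (p.1.1 / k) (p.2.1 / k)) p.1.1,
            cc k γh x (yh k γh (p.1.1 / k) (p.2.1 / k) + 1)
      else 0

noncomputable def sigB (k : ℕ) (γh : (gridGraph (k ^ 2)).E → ZMod 2) :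
    (gridGraph (k ^ 2)).V → ZMod 2 :=
  fun p => sig0 k γh p + rhoB k γh p

end CoreGrid

section CaseBLemmas

lemma rhoB_row0 (k : ℕ) (γh : (gridGraph (k ^ 2)).E → ZMod 2)
    (p : (gridGraph (k ^ 2)).V) (h : p.1.1 % k = 0) : rhoB k γh p = 0 := by
  unfold rhoB; rw [if_pos h]

lemma rhoB_top (k : ℕ) (γh : (gridGraph (k ^ 2)).E → ZMod 2) (i j x : ℕ) (hk : 0 < k)
    (hx1 : i * k ≤ x) (hx2 : x ≤ mh k γh i j) (hm2 : mh k γh i j < i * k + k)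
    (hy1 : j * k ≤ yh k γh i j) (hy2 : yh k γh i j < j * k + k)
    (hxv : x < k ^ 2) (hyv : yh k γh i j < k ^ 2) :
    rhoB k γh (gv k x (yh k γh i j) hxv hyv) =
      ∑ x' ∈ Finset.Ico (i * k) x, cc k γh x' (yh k γh i j) := by
  have hxk : x < i * k + k := by omega
  have hdx : x / k = i := div_eq_of x k i hx1 hxk
  have hdy : yh k γh i j / k = j := div_eq_of _ k j hy1 hy2
  unfold rhoB
  simp only [gv]
  by_cases h0 : x % k = 0
  · refine (if_pos h0).trans ?_
    have hx : x = i * k := (mod0_iff x k i hk hx1 hxk).1 h0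
    rw [hx, Finset.Ico_self, Finset.sum_empty]
  · refine (if_neg h0).trans ?_
    simp only [hdx, hdy]
    exact if_pos ⟨trivial, hx2⟩

lemma rhoB_bot (k : ℕ) (γh : (gridGraph (k ^ 2)).E → ZMod 2) (i j x : ℕ) (hk : 0 < k)
    (hx1 : mh k γh i j ≤ x) (hx2 : x < i * k + k) (hm1 : i * k ≤ mh k γh i j)
    (hy1 : j * k ≤ yh k γh i j) (hy2 : yh k γh i j + 1 < j * k + k)
    (hxv : x < k ^ 2) (hyv : yh k γh i j + 1 < k ^ 2) :
    rhoB k γh (gv k x (yh k γh i j + 1) hxv hyv) =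
      (∑ x' ∈ Finset.Ico (i * k) (mh k γh i j), cc k γh x' (yh k γh i j)) +
        ∑ x' ∈ Finset.Ico (mh k γh i j) x, cc k γh x' (yh k γh i j + 1) := by
  have hdx : x / k = i := div_eq_of x k i (by omega) hx2
  have hdy : (yh k γh i j + 1) / k = j := div_eq_of _ k j (by omega) (by omega)
  unfold rhoB
  simp only [gv]
  by_cases h0 : x % k = 0
  · refine (if_pos h0).trans ?_
    have hx : x = i * k := (mod0_iff x k i hk (by omega) hx2).1 h0
    have hm : mh k γh i j = i * k := by omega
    rw [hx, hm, Finset.Ico_self, Finset.sum_empty, Finset.sum_empty, add_zero]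
  · refine (if_neg h0).trans ?_
    simp only [hdx, hdy]
    refine (if_neg (by omega : ¬(yh k γh i j + 1 = yh k γh i j ∧ x ≤ mh k γh i j))).trans ?_
    exact if_pos ⟨trivial, hx1⟩

lemma parityB_row (k : ℕ) (γh : (gridGraph (k ^ 2)).E → ZMod 2) (x y : ℕ)
    (h0 : x % k = 0) (h1 : x < k ^ 2) (h2 : y + 1 < k ^ 2) :
    shiftSign (gridGraph (k ^ 2)) γh (sigB k γh) (mkHE k x y h1 h2) = 0 := by
  rw [shiftSign_eq γh _ (rfl :
    (gridGraph (k ^ 2)).ends (mkHE k x y h1 h2) = s(gv k x y h1 (by omega), gv k x (y + 1) h1 h2))]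
  simp only [sigB]
  have hre : ∀ a b c d e : ZMod 2, a + (b + c) + (d + e) = (a + b + d) + (c + e) := by decide
  rw [hre, sig0_horiz k γh x y h1 h2, zero_add,
    rhoB_row0 k γh (gv k x y h1 (by omega)) h0,
    rhoB_row0 k γh (gv k x (y + 1) h1 h2) h0, add_zero]

lemma parityB_top (k : ℕ) (γh : (gridGraph (k ^ 2)).E → ZMod 2) (i j x : ℕ) (hk : 0 < k)
    (hx1 : i * k ≤ x) (hx2 : x < mh k γh i j) (hm2 : mh k γh i j < i * k + k)
    (hy1 : j * k ≤ yh k γh i j) (hy2 : yh k γh i j < j * k + k)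
    (h1 : x + 1 < k ^ 2) (h2 : yh k γh i j < k ^ 2) :
    shiftSign (gridGraph (k ^ 2)) γh (sigB k γh) (mkVE k x (yh k γh i j) h1 h2) = 0 := by
  rw [shiftSign_eq γh _ (rfl :
    (gridGraph (k ^ 2)).ends (mkVE k x (yh k γh i j) h1 h2) =
      s(gv k x (yh k γh i j) (by omega) h2, gv k (x + 1) (yh k γh i j) h1 h2))]
  simp only [sigB]
  have hre : ∀ a b c d e : ZMod 2, a + (b + c) + (d + e) = (a + b + d) + (c + e) := by decide
  rw [hre, sig0_vert k γh x (yh k γh i j) h1 h2,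
    rhoB_top k γh i j x hk hx1 (by omega) hm2 hy1 hy2 (by omega) h2,
    rhoB_top k γh i j (x + 1) hk (by omega) (by omega) hm2 hy1 hy2 h1 h2,
    Finset.sum_Ico_succ_top hx1]
  generalize cc k γh x (yh k γh i j) = a
  generalize (∑ x' ∈ Finset.Ico (i * k) x, cc k γh x' (yh k γh i j)) = s
  revert a s; decide

lemma parityB_jog (k : ℕ) (γh : (gridGraph (k ^ 2)).E → ZMod 2) (i j : ℕ) (hk : 0 < k)
    (hm1 : i * k ≤ mh k γh i j) (hm2 : mh k γh i j < i * k + k)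
    (hy1 : j * k ≤ yh k γh i j) (hy2 : yh k γh i j + 1 < j * k + k)
    (h1 : mh k γh i j < k ^ 2) (h2 : yh k γh i j + 1 < k ^ 2) :
    shiftSign (gridGraph (k ^ 2)) γh (sigB k γh) (mkHE k (mh k γh i j) (yh k γh i j) h1 h2) = 0 := by
  rw [shiftSign_eq γh _ (rfl :
    (gridGraph (k ^ 2)).ends (mkHE k (mh k γh i j) (yh k γh i j) h1 h2) =
      s(gv k (mh k γh i j) (yh k γh i j) h1 (by omega),
        gv k (mh k γh i j) (yh k γh i j + 1) h1 h2))]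
  simp only [sigB]
  have hre : ∀ a b c d e : ZMod 2, a + (b + c) + (d + e) = (a + b + d) + (c + e) := by decide
  rw [hre, sig0_horiz k γh (mh k γh i j) (yh k γh i j) h1 h2, zero_add,
    rhoB_top k γh i j (mh k γh i j) hk hm1 (le_refl _) hm2 hy1 (by omega) h1 (by omega),
    rhoB_bot k γh i j (mh k γh i j) hk (le_refl _) hm2 hm1 hy1 hy2 h1 h2,
    Finset.Ico_self, Finset.sum_empty, add_zero, z2_aa]

lemma parityB_bot (k : ℕ) (γh : (gridGraph (k ^ 2)).E → ZMod 2) (i j x : ℕ) (hk : 0 < k)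
    (hx1 : mh k γh i j ≤ x) (hx2 : x + 1 < i * k + k) (hm1 : i * k ≤ mh k γh i j)
    (hy1 : j * k ≤ yh k γh i j) (hy2 : yh k γh i j + 1 < j * k + k)
    (h1 : x + 1 < k ^ 2) (h2 : yh k γh i j + 1 < k ^ 2) :
    shiftSign (gridGraph (k ^ 2)) γh (sigB k γh) (mkVE k x (yh k γh i j + 1) h1 h2) = 0 := by
  rw [shiftSign_eq γh _ (rfl :
    (gridGraph (k ^ 2)).ends (mkVE k x (yh k γh i j + 1) h1 h2) =
      s(gv k x (yh k γh i j + 1) (by omega) h2, gv k (x + 1) (yh k γh i j + 1) h1 h2))]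
  simp only [sigB]
  have hre : ∀ a b c d e : ZMod 2, a + (b + c) + (d + e) = (a + b + d) + (c + e) := by decide
  rw [hre, sig0_vert k γh x (yh k γh i j + 1) h1 h2,
    rhoB_bot k γh i j x hk hx1 (by omega) hm1 hy1 hy2 (by omega) h2,
    rhoB_bot k γh i j (x + 1) hk (by omega) (by omega) hm1 hy1 hy2 h1 h2,
    Finset.sum_Ico_succ_top hx1]
  generalize cc k γh x (yh k γh i j + 1) = a
  generalize (∑ x' ∈ Finset.Ico (i * k) (mh k γh i j), cc k γh x' (yh k γh i j)) = s
  generalize (∑ x' ∈ Finset.Ico (mh k γh i j) x, cc k γh x' (yh k γh i j + 1)) = t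
  revert a s t; decide

lemma parityB_model (k : ℕ) (γh : (gridGraph (k ^ 2)).E → ZMod 2) (i j : ℕ) (hk : 0 < k)
    (hm1 : i * k ≤ mh k γh i j) (hm2 : mh k γh i j < i * k + k)
    (hy1 : j * k ≤ yh k γh i j) (hy2 : yh k γh i j + 1 < j * k + k)
    (hphi : phiB k γh i j (mh k γh i j) = 0)
    (h1 : i * k + k - 1 + 1 < k ^ 2) (h2 : yh k γh i j + 1 < k ^ 2) :
    shiftSign (gridGraph (k ^ 2)) γh (sigB k γh)
      (mkVE k (i * k + k - 1) (yh k γh i j + 1) h1 h2) = 0 := by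
  rw [shiftSign_eq γh _ (rfl :
    (gridGraph (k ^ 2)).ends (mkVE k (i * k + k - 1) (yh k γh i j + 1) h1 h2) =
      s(gv k (i * k + k - 1) (yh k γh i j + 1) (by omega) h2,
        gv k (i * k + k - 1 + 1) (yh k γh i j + 1) h1 h2))]
  simp only [sigB]
  have hre : ∀ a b c d e : ZMod 2, a + (b + c) + (d + e) = (a + b + d) + (c + e) := by decide
  have h0 : (i * k + k - 1 + 1) % k = 0 := by
    have e1 : (i + 1) * k = i * k + k := by ring
    have e2 : i * k + k - 1 + 1 = (i + 1) * k := by omega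
    rw [e2]; exact Nat.mul_mod_left _ _
  rw [hre, sig0_vert k γh (i * k + k - 1) (yh k γh i j + 1) h1 h2,
    rhoB_bot k γh i j (i * k + k - 1) hk (by omega) (by omega) hm1 hy1 hy2 (by omega) h2,
    rhoB_row0 k γh (gv k (i * k + k - 1 + 1) (yh k γh i j + 1) h1 h2) h0, add_zero]
  unfold phiB at hphi
  rw [show i * k + k = (i * k + k - 1) + 1 by omega,
    Finset.sum_Ico_succ_top (by omega : mh k γh i j ≤ i * k + k - 1)] at hphi
  revert hphi
  generalize cc k γh (i * k + k - 1) (yh k γh i j + 1) = a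
  generalize (∑ x' ∈ Finset.Ico (i * k) (mh k γh i j), cc k γh x' (yh k γh i j)) = s
  generalize (∑ x' ∈ Finset.Ico (mh k γh i j) (i * k + k - 1), cc k γh x' (yh k γh i j + 1)) = t
  revert a s t; decide

end CaseBLemmas

/-- anchor vertex of a Case-B branch set -/
def anchor (k : ℕ) (v : (gridGraph k).V) : (gridGraph (k ^ 2)).V :=
  gv k (v.1.1 * k) (v.2.1 * k)
    (by have := lt_sq1 k v.1.1 0 v.1.2 v.1.pos; omega)
    (by have := lt_sq1 k v.2.1 0 v.2.2 v.1.pos; omega)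

section ConnB

variable (k : ℕ) (γh : (gridGraph (k ^ 2)).E → ZMod 2)

/-- the even-connection relation within a Case-B branch set -/
def relB (v : (gridGraph k).V) (x y : (gridGraph (k ^ 2)).V) : Prop :=
  x ∈ BSb k γh v ∧ y ∈ BSb k γh v ∧
    ∃ e, shiftSign (gridGraph (k ^ 2)) γh (sigB k γh) e = 0 ∧
      (gridGraph (k ^ 2)).ends e = s(x, y)

lemma relB_symm (v : (gridGraph k).V) : Symmetric (relB k γh v) := by
  rintro x y ⟨hx, hy, e, hpar, he⟩
  exact ⟨hy, hx, e, hpar, by rw [he, Sym2.eq_swap]⟩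

lemma connB (hk : 0 < k)
    (hval : ∀ i j : ℕ, i + 1 < k → j < k →
      i * k ≤ xh k γh i j ∧ xh k γh i j + 1 < i * k + k ∧
      j * k ≤ yh k γh i j ∧ yh k γh i j + 1 < j * k + k)
    (v : (gridGraph k).V) (p : (gridGraph (k ^ 2)).V) (hp : p ∈ BSb k γh v) :
    Relation.ReflTransGen (relB k γh v) (anchor k v) p := by
  obtain ⟨⟨I, hI⟩, ⟨J, hJ⟩⟩ := v
  have hIk : I * k + k ≤ k ^ 2 := by
    have h1 := le_sq1 k (I + 1) hI
    have h2 : (I + 1) * k = I * k + k := by ring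
    omega
  have hJk : J * k + k ≤ k ^ 2 := by
    have h1 := le_sq1 k (J + 1) hJ
    have h2 : (J + 1) * k = J * k + k := by ring
    omega
  -- the row chain
  have c1 : ∀ d, ∀ hd : d < k, Relation.ReflTransGen (relB k γh (⟨I, hI⟩, ⟨J, hJ⟩))
      (anchor k (⟨I, hI⟩, ⟨J, hJ⟩)) (gv k (I * k) (J * k + d) (by omega) (by omega)) := by
    intro d
    induction d with
    | zero => intro _; exact Relation.ReflTransGen.refl
    | succ n ih =>
      intro hd
      refine (ih (by omega)).tail ?_
      refine ⟨Or.inl ⟨rfl, by simp only [gv]; omega, by simp only [gv]; omega⟩,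
        Or.inl ⟨rfl, by simp only [gv]; omega, by simp only [gv]; omega⟩,
        mkHE k (I * k) (J * k + n) (by omega) (by omega),
        parityB_row k γh _ _ (Nat.mul_mod_left I k) _ _, rfl⟩
  by_cases hIv : I + 1 < k
  · -- all three pieces may be needed
    obtain ⟨hx1, hx2, hy1, hy2⟩ := hval I J hIv hJ
    obtain ⟨hm1, hm2⟩ := mh_bounds k γh I J hx1 hx2
    -- reach the top of the connector
    have hyb : yh k γh I J < k ^ 2 := by omega
    have ctop0 : Relation.ReflTransGen (relB k γh (⟨I, hI⟩, ⟨J, hJ⟩)) (anchor k (⟨I, hI⟩, ⟨J, hJ⟩))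
        (gv k (I * k) (yh k γh I J) (by omega) hyb) := by
      have h := c1 (yh k γh I J - J * k) (by omega)
      rwa [show gv k (I * k) (J * k + (yh k γh I J - J * k)) (by omega) (by omega)
        = gv k (I * k) (yh k γh I J) (by omega) hyb from Vext (by simp only [gv])
          (by simp only [gv]; omega)] at h
    -- descend along the top piece
    have c2 : ∀ d, ∀ hd : I * k + d ≤ mh k γh I J, Relation.ReflTransGen (relB k γh (⟨I, hI⟩, ⟨J, hJ⟩))
        (anchor k (⟨I, hI⟩, ⟨J, hJ⟩)) (gv k (I * k + d) (yh k γh I J) (by omega) hyb) := by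
      intro d
      induction d with
      | zero => intro _; exact ctop0
      | succ n ih =>
        intro hd
        refine (ih (by omega)).tail ?_
        refine ⟨Or.inr ⟨hIv, Or.inl ⟨rfl, by simp only [gv]; omega, by simp only [gv]; omega⟩⟩,
          Or.inr ⟨hIv, Or.inl ⟨rfl, by simp only [gv]; omega, by simp only [gv]; omega⟩⟩,
          mkVE k (I * k + n) (yh k γh I J) (by omega) hyb,
          parityB_top k γh I J (I * k + n) hk (by omega) (by omega) hm2 hy1 (by omega)
            (by omega) hyb, rfl⟩
    -- the jog
    have cjog : Relation.ReflTransGen (relB k γh (⟨I, hI⟩, ⟨J, hJ⟩)) (anchor k (⟨I, hI⟩, ⟨J, hJ⟩))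
        (gv k (mh k γh I J) (yh k γh I J + 1) (by omega) (by omega)) := by
      have h := c2 (mh k γh I J - I * k) (by omega)
      rw [show gv k (I * k + (mh k γh I J - I * k)) (yh k γh I J) (by omega) hyb
        = gv k (mh k γh I J) (yh k γh I J) (by omega) hyb from Vext
          (by simp only [gv]; omega) (by simp only [gv])] at h
      refine h.tail ?_
      refine ⟨Or.inr ⟨hIv, Or.inl ⟨rfl, by simp only [gv]; omega, by simp only [gv]; omega⟩⟩,
        Or.inr ⟨hIv, Or.inr ⟨rfl, by simp only [gv]; omega, by simp only [gv]; omega⟩⟩,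
        mkHE k (mh k γh I J) (yh k γh I J) (by omega) (by omega),
        parityB_jog k γh I J hk hm1 hm2 hy1 hy2 (by omega) (by omega), rfl⟩
    -- descend along the bottom piece
    have c3 : ∀ d, ∀ hd : mh k γh I J + d < I * k + k, Relation.ReflTransGen (relB k γh (⟨I, hI⟩, ⟨J, hJ⟩))
        (anchor k (⟨I, hI⟩, ⟨J, hJ⟩)) (gv k (mh k γh I J + d) (yh k γh I J + 1) (by omega) (by omega)) := by
      intro d
      induction d with
      | zero => intro _; exact cjog
      | succ n ih =>
        intro hd
        refine (ih (by omega)).tail ?_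
        refine ⟨Or.inr ⟨hIv, Or.inr ⟨rfl, by simp only [gv]; omega, by simp only [gv]; omega⟩⟩,
          Or.inr ⟨hIv, Or.inr ⟨rfl, by simp only [gv]; omega, by simp only [gv]; omega⟩⟩,
          mkVE k (mh k γh I J + n) (yh k γh I J + 1) (by omega) (by omega),
          parityB_bot k γh I J (mh k γh I J + n) hk (by omega) (by omega) hm1 hy1 hy2
            (by omega) (by omega), rfl⟩
    -- now split on the membership of p
    rcases hp with ⟨hrow, hcol1, hcol2⟩ | ⟨_, ⟨hcol, hr1, hr2⟩ | ⟨hcol, hr1, hr2⟩⟩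
    · have hc0 : p.1.1 = I * k := hrow
      have hd1 : J * k ≤ p.2.1 := hcol1
      have hd2 : p.2.1 < J * k + k := hcol2
      have h := c1 (p.2.1 - J * k) (by omega)
      rwa [show gv k (I * k) (J * k + (p.2.1 - J * k)) (by omega) (by omega) = p from
        Vext (by simp only [gv]; omega) (by simp only [gv]; omega)] at h
    · have hcol' : p.2.1 = yh k γh I J := hcol
      have hr1' : I * k ≤ p.1.1 := hr1
      have hr2' : p.1.1 ≤ mh k γh I J := hr2
      have h := c2 (p.1.1 - I * k) (by omega)
      rwa [show gv k (I * k + (p.1.1 - I * k)) (yh k γh I J) (by omega) hyb = p from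
        Vext (by simp only [gv]; omega) (by simp only [gv]; omega)] at h
    · have hcol' : p.2.1 = yh k γh I J + 1 := hcol
      have hr1' : mh k γh I J ≤ p.1.1 := hr1
      have hr2' : p.1.1 < I * k + k := hr2
      have h := c3 (p.1.1 - mh k γh I J) (by omega)
      rwa [show gv k (mh k γh I J + (p.1.1 - mh k γh I J)) (yh k γh I J + 1)
          (by omega) (by omega) = p from
        Vext (by simp only [gv]; omega) (by simp only [gv]; omega)] at h
  · -- last band: only the row segment
    rcases hp with ⟨hrow, hcol1, hcol2⟩ | ⟨hbad, _⟩
    · have hc0 : p.1.1 = I * k := hrow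
      have hd1 : J * k ≤ p.2.1 := hcol1
      have hd2 : p.2.1 < J * k + k := hcol2
      have h := c1 (p.2.1 - J * k) (by omega)
      rwa [show gv k (I * k) (J * k + (p.2.1 - J * k)) (by omega) (by omega) = p from
        Vext (by simp only [gv]; omega) (by simp only [gv]; omega)] at h
    · exact absurd hbad hIv

end ConnB

/-- edge map for Case B -/
noncomputable def emB (k : ℕ) (γh : (gridGraph (k ^ 2)).E → ZMod 2) (e : (gridGraph k).E) :
    (gridGraph (k ^ 2)).E :=
  if h : (ecA e).1.1 = (ecB e).1.1 then
    mkHE k ((ecA e).1.1 * k) (min (ecA e).2.1 (ecB e).2.1 * k + k - 1)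
      (by have := lt_sq1 k (ecA e).1.1 0 (ecA e).1.2 (ecA e).1.pos; omega)
      (by
        have hs := (ec_spec e).1
        have h1 := (ecA e).2.2
        have h2 := (ecB e).2.2
        simp only [gridAdj] at hs
        have hm : min (ecA e).2.1 (ecB e).2.1 + 2 ≤ k := by omega
        have h3 : (min (ecA e).2.1 (ecB e).2.1 + 2) * k ≤ k * k :=
          Nat.mul_le_mul hm (le_refl k)
        have h4 : (min (ecA e).2.1 (ecB e).2.1 + 2) * k
            = min (ecA e).2.1 (ecB e).2.1 * k + 2 * k := by ring
        have h5 : k ^ 2 = k * k := pow_two k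
        have hk : 0 < k := (ecA e).1.pos
        omega)
  else
    mkVE k (min (ecA e).1.1 (ecB e).1.1 * k + k - 1)
      (yh k γh (min (ecA e).1.1 (ecB e).1.1) (ecA e).2.1 + 1)
      (by
        have hs := (ec_spec e).1
        have h1 := (ecA e).1.2
        have h2 := (ecB e).1.2
        simp only [gridAdj] at hs
        have hm : min (ecA e).1.1 (ecB e).1.1 + 2 ≤ k := by omega
        have h3 : (min (ecA e).1.1 (ecB e).1.1 + 2) * k ≤ k * k :=
          Nat.mul_le_mul hm (le_refl k)
        have h4 : (min (ecA e).1.1 (ecB e).1.1 + 2) * k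
            = min (ecA e).1.1 (ecB e).1.1 * k + 2 * k := by ring
        have h5 : k ^ 2 = k * k := pow_two k
        have hk : 0 < k := (ecA e).1.pos
        omega)
      (by
        have hs := (ec_spec e).1
        have h1 := (ecA e).1.2
        have h2 := (ecB e).1.2
        simp only [gridAdj] at hs
        have hk2 : 2 ≤ k := by omega
        have h3 : ((ecA e).2.1 + 1) * k ≤ k * k := Nat.mul_le_mul (ecA e).2.2 (le_refl k)
        have h4 : ((ecA e).2.1 + 1) * k = (ecA e).2.1 * k + k := by ring
        have h5 : k ^ 2 = k * k := pow_two k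
        have h6 : yh k γh (min (ecA e).1.1 (ecB e).1.1) (ecA e).2.1
            ≤ (ecA e).2.1 * k + k - 2 := by
          unfold yh; omega
        omega)

lemma caseB (k : ℕ) (γh : (gridGraph (k ^ 2)).E → ZMod 2) (hk : 0 < k)
    (hB : ∀ i j : ℕ, i + 1 < k → j < k → ∃ p : ℕ × ℕ, i * k ≤ p.1 ∧ p.1 + 1 < i * k + k ∧
      j * k ≤ p.2 ∧ p.2 + 1 < j * k + k ∧ cc k γh p.1 p.2 ≠ cc k γh p.1 (p.2 + 1)) :
    IsSignedMinor (gridGraph k) (γ₀ (gridGraph k)) (gridGraph (k ^ 2)) γh := by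
  have hval : ∀ i j : ℕ, i + 1 < k → j < k →
      i * k ≤ xh k γh i j ∧ xh k γh i j + 1 < i * k + k ∧
      j * k ≤ yh k γh i j ∧ yh k γh i j + 1 < j * k + k := by
    intro i j hi hj
    obtain ⟨h1, h2, h3, h4, _⟩ := oc_spec k γh i j (hB i j hi hj)
    exact ⟨h1, h2, h3, h4⟩
  have hodd : ∀ i j : ℕ, i + 1 < k → j < k →
      cc k γh (xh k γh i j) (yh k γh i j) ≠ cc k γh (xh k γh i j) (yh k γh i j + 1) :=
    fun i j hi hj => (oc_spec k γh i j (hB i j hi hj)).2.2.2.2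
  have hkey : ∀ w : (gridGraph k).V, ∀ q ∈ BSb k γh w,
      q.1.1 / k = w.1.1 ∧ q.2.1 / k = w.2.1 := by
    intro w q hq
    obtain ⟨⟨I, hI⟩, ⟨J, hJ⟩⟩ := w
    rcases hq with ⟨hrow, h1, h2⟩ | ⟨hIv, ⟨hcol, h1, h2⟩ | ⟨hcol, h1, h2⟩⟩
    · have hrow' : q.1.1 = I * k := hrow
      have h1' : J * k ≤ q.2.1 := h1
      have h2' : q.2.1 < J * k + k := h2
      exact ⟨div_eq_of _ k I (by omega) (by omega), div_eq_of _ k J h1' h2'⟩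
    · have hIv' : I + 1 < k := hIv
      obtain ⟨hx1, hx2, hy1, hy2⟩ := hval I J hIv' hJ
      obtain ⟨hm1, hm2⟩ := mh_bounds k γh I J hx1 hx2
      have hcol' : q.2.1 = yh k γh I J := hcol
      have h1' : I * k ≤ q.1.1 := h1
      have h2' : q.1.1 ≤ mh k γh I J := h2
      exact ⟨div_eq_of _ k I h1' (by omega), div_eq_of _ k J (by omega) (by omega)⟩
    · have hIv' : I + 1 < k := hIv
      obtain ⟨hx1, hx2, hy1, hy2⟩ := hval I J hIv' hJ
      obtain ⟨hm1, hm2⟩ := mh_bounds k γh I J hx1 hx2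
      have hcol' : q.2.1 = yh k γh I J + 1 := hcol
      have h1' : mh k γh I J ≤ q.1.1 := h1
      have h2' : q.1.1 < I * k + k := h2
      exact ⟨div_eq_of _ k I (by omega) (by omega), div_eq_of _ k J (by omega) (by omega)⟩
  refine ⟨{
    γ' := shiftSign (gridGraph (k ^ 2)) γh (sigB k γh)
    shift := shiftSign_isShift _ _ _
    bs := BSb k γh
    em := emB k γh
    bs_nonempty := ?_
    bs_disjoint := ?_
    bs_connected := ?_
    em_inj := ?_
    em_ends := ?_
    em_parity := ?_ }⟩
  · intro v
    exact ⟨anchor k v, Or.inl ⟨rfl, by simp only [anchor, gv]; omega, by simp only [anchor, gv]; omega⟩⟩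
  · intro u v huv
    rw [Set.disjoint_left]
    intro p hpu hpv
    obtain ⟨h1, h2⟩ := hkey u p hpu
    obtain ⟨h3, h4⟩ := hkey v p hpv
    exact huv (Prod.ext (Fin.ext (h1 ▸ h3)) (Fin.ext (h2 ▸ h4)))
  · intro v a ha b hb
    exact Relation.ReflTransGen.trans
      (by haveI : Std.Symm (relB k γh v) := ⟨fun a b h => relB_symm k γh v h⟩; exact @Std.Symm.symm _ (Relation.ReflTransGen (relB k γh v)) _ _ _ (connB k γh hk hval v a ha))
      (connB k γh hk hval v b hb)
  · -- em_inj
    intro e e' heq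
    have hs := (ec_spec e).1
    have hs' := (ec_spec e').1
    have hv := (ec_spec e).2
    have hv' := (ec_spec e').2
    have hb1 := (ecA e).1.2; have hb2 := (ecA e).2.2
    have hb3 := (ecB e).1.2; have hb4 := (ecB e).2.2
    have hb1' := (ecA e').1.2; have hb2' := (ecA e').2.2
    have hb3' := (ecB e').1.2; have hb4' := (ecB e').2.2
    simp only [gridAdj] at hs hs'
    have hvaleq : (emB k γh e).1 = (emB k γh e').1 := congrArg Subtype.val heq
    unfold emB at hvaleq
    have hcancel : ∀ x y : ℕ, x * k = y * k → x = y :=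
      fun x y hxy => Nat.eq_of_mul_eq_mul_right hk hxy
    refine Subtype.ext (hv.trans (Eq.trans ?_ hv'.symm))
    by_cases h : (ecA e).1.1 = (ecB e).1.1 <;>
      by_cases h' : (ecA e').1.1 = (ecB e').1.1
    · rw [dif_pos h, dif_pos h'] at hvaleq
      simp only [mkHE, gv] at hvaleq
      rw [Sym2.eq_iff] at hvaleq
      simp only [Prod.mk.injEq, Fin.mk.injEq] at hvaleq
      have ha : (ecA e).1.1 = (ecA e').1.1 := by
        rcases hvaleq with ⟨⟨q1, _⟩, _⟩ | ⟨⟨q1, _⟩, ⟨q2, _⟩⟩ <;> exact hcancel _ _ q1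
      have hm : min (ecA e).2.1 (ecB e).2.1 = min (ecA e').2.1 (ecB e').2.1 := by
        refine hcancel _ _ ?_
        rcases hvaleq with ⟨⟨_, q1⟩, ⟨_, q2⟩⟩ | ⟨⟨_, q1⟩, ⟨_, q2⟩⟩ <;> omega
      rw [Sym2.eq_iff]
      rcases (show (ecA e).2.1 + 1 = (ecB e).2.1 ∨ (ecB e).2.1 + 1 = (ecA e).2.1
          from by omega) with ho | ho <;>
        rcases (show (ecA e').2.1 + 1 = (ecB e').2.1 ∨ (ecB e').2.1 + 1 = (ecA e').2.1
          from by omega) with ho' | ho'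
      · exact Or.inl ⟨Vext (by omega) (by omega), Vext (by omega) (by omega)⟩
      · exact Or.inr ⟨Vext (by omega) (by omega), Vext (by omega) (by omega)⟩
      · exact Or.inr ⟨Vext (by omega) (by omega), Vext (by omega) (by omega)⟩
      · exact Or.inl ⟨Vext (by omega) (by omega), Vext (by omega) (by omega)⟩
    · rw [dif_pos h, dif_neg h'] at hvaleq
      simp only [mkHE, mkVE, gv] at hvaleq
      rw [Sym2.eq_iff] at hvaleq
      simp only [Prod.mk.injEq, Fin.mk.injEq] at hvaleq
      exfalso
      have hk2 : 2 ≤ k := by omega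
      rcases hvaleq with ⟨⟨q1, _⟩, ⟨q2, _⟩⟩ | ⟨⟨q1, _⟩, ⟨q2, _⟩⟩ <;> omega
    · rw [dif_neg h, dif_pos h'] at hvaleq
      simp only [mkHE, mkVE, gv] at hvaleq
      rw [Sym2.eq_iff] at hvaleq
      simp only [Prod.mk.injEq, Fin.mk.injEq] at hvaleq
      exfalso
      have hk2 : 2 ≤ k := by omega
      rcases hvaleq with ⟨⟨q1, _⟩, ⟨q2, _⟩⟩ | ⟨⟨q1, _⟩, ⟨q2, _⟩⟩ <;> omega
    · rw [dif_neg h, dif_neg h'] at hvaleq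
      simp only [mkVE, gv] at hvaleq
      rw [Sym2.eq_iff] at hvaleq
      simp only [Prod.mk.injEq, Fin.mk.injEq] at hvaleq
      have hk2 : 2 ≤ k := by omega
      have hm : min (ecA e).1.1 (ecB e).1.1 = min (ecA e').1.1 (ecB e').1.1 := by
        refine hcancel _ _ ?_
        rcases hvaleq with ⟨⟨q1, _⟩, _⟩ | ⟨⟨q1, _⟩, ⟨q2, _⟩⟩ <;> omega
      have hyy : yh k γh (min (ecA e).1.1 (ecB e).1.1) (ecA e).2.1
          = yh k γh (min (ecA e').1.1 (ecB e').1.1) (ecA e').2.1 := by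
        rcases hvaleq with ⟨⟨_, q1⟩, _⟩ | ⟨⟨_, q1⟩, _⟩ <;> omega
      have hIv : min (ecA e).1.1 (ecB e).1.1 + 1 < k := by omega
      obtain ⟨_, _, hy1, hy2⟩ := hval _ _ hIv hb2
      obtain ⟨_, _, hy1', hy2'⟩ := hval _ _ (show min (ecA e').1.1 (ecB e').1.1 + 1 < k
        from by omega) hb2'
      have hJ : (ecA e).2.1 = (ecA e').2.1 := by
        have d1 := div_eq_of (yh k γh (min (ecA e).1.1 (ecB e).1.1) (ecA e).2.1) k
          (ecA e).2.1 hy1 (by omega)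
        have d2 := div_eq_of (yh k γh (min (ecA e').1.1 (ecB e').1.1) (ecA e').2.1) k
          (ecA e').2.1 hy1' (by omega)
        rw [← hyy] at d2
        omega
      rw [Sym2.eq_iff]
      rcases (show (ecA e).1.1 + 1 = (ecB e).1.1 ∨ (ecB e).1.1 + 1 = (ecA e).1.1
          from by omega) with ho | ho <;>
        rcases (show (ecA e').1.1 + 1 = (ecB e').1.1 ∨ (ecB e').1.1 + 1 = (ecA e').1.1
          from by omega) with ho' | ho'
      · exact Or.inl ⟨Vext (by omega) (by omega), Vext (by omega) (by omega)⟩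
      · exact Or.inr ⟨Vext (by omega) (by omega), Vext (by omega) (by omega)⟩
      · exact Or.inr ⟨Vext (by omega) (by omega), Vext (by omega) (by omega)⟩
      · exact Or.inl ⟨Vext (by omega) (by omega), Vext (by omega) (by omega)⟩
  · -- em_ends
    intro e u v hends
    have hs := (ec_spec e).1
    have hv := (ec_spec e).2
    have hb1 := (ecA e).1.2; have hb2 := (ecA e).2.2
    have hb3 := (ecB e).1.2; have hb4 := (ecB e).2.2
    simp only [gridAdj] at hs
    have h0 : s(ecA e, ecB e) = s(u, v) := by rw [← hv]; exact hends
    replace h0 := Sym2.eq_iff.mp h0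
    by_cases h : (ecA e).1.1 = (ecB e).1.1
    · -- horizontal edge
      have hlk : (ecA e).1.1 * k + k ≤ k ^ 2 := by
        have h1 := le_sq1 k ((ecA e).1.1 + 1) hb1
        have h2 : ((ecA e).1.1 + 1) * k = (ecA e).1.1 * k + k := by ring
        omega
      have hmin2 : min (ecA e).2.1 (ecB e).2.1 + 2 ≤ k := by omega
      have hlk2 : min (ecA e).2.1 (ecB e).2.1 * k + 2 * k ≤ k ^ 2 := by
        have h1 := le_sq1 k (min (ecA e).2.1 (ecB e).2.1 + 2) hmin2
        have h2 : (min (ecA e).2.1 (ecB e).2.1 + 2) * k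
            = min (ecA e).2.1 (ecB e).2.1 * k + 2 * k := by ring
        omega
      have hAB : ∀ w1 w2 : Fin k × Fin k, (w1.1.1 = (ecA e).1.1 ∧ w1.2.1 * k
            = min (ecA e).2.1 (ecB e).2.1 * k) →
          (w2.1.1 = (ecA e).1.1 ∧ w2.2.1 * k = min (ecA e).2.1 (ecB e).2.1 * k + k) →
          ∃ a ∈ BSb k γh w1, ∃ b ∈ BSb k γh w2,
            (gridGraph (k ^ 2)).ends (emB k γh e) = s(a, b) := by
        rintro w1 w2 ⟨hw1r, hw1c⟩ ⟨hw2r, hw2c⟩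
        refine ⟨gv k ((ecA e).1.1 * k) (min (ecA e).2.1 (ecB e).2.1 * k + k - 1)
            (by omega) (by omega),
          Or.inl ⟨by simp only [gv]; rw [hw1r], by simp only [gv]; omega,
            by simp only [gv]; omega⟩,
          gv k ((ecA e).1.1 * k) (min (ecA e).2.1 (ecB e).2.1 * k + k - 1 + 1)
            (by omega) (by omega),
          Or.inl ⟨by simp only [gv]; rw [hw2r], by simp only [gv]; omega,
            by simp only [gv]; omega⟩, ?_⟩
        unfold emB
        rw [dif_pos h]
        rfl
      rcases h0 with ⟨hu, hvv⟩ | ⟨hu, hvv⟩ <;>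
        rcases (show (ecA e).2.1 + 1 = (ecB e).2.1 ∨ (ecB e).2.1 + 1 = (ecA e).2.1
          from by omega) with ho | ho
      · subst hu; subst hvv
        exact hAB _ _ ⟨rfl, by
          have h3 : min (ecA e).2.1 (ecB e).2.1 = (ecA e).2.1 := by omega
          rw [h3]⟩ ⟨h.symm, by
          have h2 : ((ecA e).2.1 + 1) * k = (ecA e).2.1 * k + k := by ring
          have h3 : min (ecA e).2.1 (ecB e).2.1 = (ecA e).2.1 := by omega
          rw [h3, ← h2]
          congr 1
          omega⟩
      · subst hu; subst hvv
        obtain ⟨a, ha, b, hb, hab⟩ := hAB (ecB e) (ecA e) ⟨h.symm, by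
            have h3 : min (ecA e).2.1 (ecB e).2.1 = (ecB e).2.1 := by omega
            rw [h3]⟩ ⟨rfl, by
            have h2 : ((ecB e).2.1 + 1) * k = (ecB e).2.1 * k + k := by ring
            have h3 : min (ecA e).2.1 (ecB e).2.1 = (ecB e).2.1 := by omega
            rw [h3, ← h2]
            congr 1
            omega⟩
        exact ⟨b, hb, a, ha, by rw [hab, Sym2.eq_swap]⟩
      · subst hu; subst hvv
        obtain ⟨a, ha, b, hb, hab⟩ := hAB (ecA e) (ecB e) ⟨rfl, by
            have h3 : min (ecA e).2.1 (ecB e).2.1 = (ecA e).2.1 := by omega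
            rw [h3]⟩ ⟨h.symm, by
            have h2 : ((ecA e).2.1 + 1) * k = (ecA e).2.1 * k + k := by ring
            have h3 : min (ecA e).2.1 (ecB e).2.1 = (ecA e).2.1 := by omega
            rw [h3, ← h2]
            congr 1
            omega⟩
        exact ⟨b, hb, a, ha, by rw [hab, Sym2.eq_swap]⟩
      · subst hu; subst hvv
        exact hAB _ _ ⟨h.symm, by
            have h3 : min (ecA e).2.1 (ecB e).2.1 = (ecB e).2.1 := by omega
            rw [h3]⟩ ⟨rfl, by
            have h2 : ((ecB e).2.1 + 1) * k = (ecB e).2.1 * k + k := by ring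
            have h3 : min (ecA e).2.1 (ecB e).2.1 = (ecB e).2.1 := by omega
            rw [h3, ← h2]
            congr 1
            omega⟩
    · -- vertical edge
      have hk2 : 2 ≤ k := by omega
      set I := min (ecA e).1.1 (ecB e).1.1 with hIdef
      have hIv : I + 1 < k := by omega
      have hJv : (ecA e).2.1 < k := hb2
      obtain ⟨hx1, hx2, hy1, hy2⟩ := hval I (ecA e).2.1 hIv hJv
      obtain ⟨hm1, hm2⟩ := mh_bounds k γh I (ecA e).2.1 hx1 hx2
      have hlk : I * k + 2 * k ≤ k ^ 2 := by
        have h1 := le_sq1 k (I + 2) (by omega)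
        have h2 : (I + 2) * k = I * k + 2 * k := by ring
        omega
      have hcols : (ecA e).2.1 = (ecB e).2.1 := by omega
      have hck : (ecA e).2.1 * k + k ≤ k ^ 2 := by
        have h1 := le_sq1 k ((ecA e).2.1 + 1) hb2
        have h2 : ((ecA e).2.1 + 1) * k = (ecA e).2.1 * k + k := by ring
        omega
      have hAB : ∀ w1 w2 : Fin k × Fin k,
          (w1.1.1 = I ∧ w1.2.1 = (ecA e).2.1) →
          (w2.1.1 * k = I * k + k ∧ w2.2.1 = (ecA e).2.1) →
          ∃ a ∈ BSb k γh w1, ∃ b ∈ BSb k γh w2,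
            (gridGraph (k ^ 2)).ends (emB k γh e) = s(a, b) := by
        rintro w1 w2 ⟨hw1r, hw1c⟩ ⟨hw2r, hw2c⟩
        refine ⟨gv k (I * k + k - 1) (yh k γh I (ecA e).2.1 + 1) (by omega) (by omega),
          Or.inr ⟨by rw [hw1r]; exact hIv,
            Or.inr ⟨by simp only [gv]; rw [hw1r, hw1c],
              by simp only [gv]; rw [hw1r, hw1c]; omega,
              by simp only [gv]; rw [hw1r]; omega⟩⟩,
          gv k (I * k + k - 1 + 1) (yh k γh I (ecA e).2.1 + 1) (by omega) (by omega),
          Or.inl ⟨by simp only [gv]; omega, by simp only [gv]; rw [hw2c]; omega,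
            by simp only [gv]; rw [hw2c]; omega⟩, ?_⟩
        unfold emB
        rw [dif_neg h]
        rfl
      rcases h0 with ⟨hu, hvv⟩ | ⟨hu, hvv⟩ <;>
        rcases (show (ecA e).1.1 + 1 = (ecB e).1.1 ∨ (ecB e).1.1 + 1 = (ecA e).1.1
          from by omega) with ho | ho
      · subst hu; subst hvv
        exact hAB _ _ ⟨by omega, rfl⟩ ⟨by
            have h2 : ((ecA e).1.1 + 1) * k = (ecA e).1.1 * k + k := by ring
            have h3 : I = (ecA e).1.1 := by omega
            rw [← ho, h2, h3], hcols.symm⟩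
      · subst hu; subst hvv
        obtain ⟨a, ha, b, hb, hab⟩ := hAB (ecB e) (ecA e) ⟨by omega, hcols.symm⟩ ⟨by
            have h2 : ((ecB e).1.1 + 1) * k = (ecB e).1.1 * k + k := by ring
            have h3 : I = (ecB e).1.1 := by omega
            rw [← ho, h2, h3], rfl⟩
        exact ⟨b, hb, a, ha, by rw [hab, Sym2.eq_swap]⟩
      · subst hu; subst hvv
        obtain ⟨a, ha, b, hb, hab⟩ := hAB (ecA e) (ecB e) ⟨by omega, rfl⟩ ⟨by
            have h2 : ((ecA e).1.1 + 1) * k = (ecA e).1.1 * k + k := by ring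
            have h3 : I = (ecA e).1.1 := by omega
            rw [← ho, h2, h3], hcols.symm⟩
        exact ⟨b, hb, a, ha, by rw [hab, Sym2.eq_swap]⟩
      · subst hu; subst hvv
        exact hAB _ _ ⟨by omega, hcols.symm⟩ ⟨by
            have h2 : ((ecB e).1.1 + 1) * k = (ecB e).1.1 * k + k := by ring
            have h3 : I = (ecB e).1.1 := by omega
            rw [← ho, h2, h3], rfl⟩
  · -- em_parity
    intro e
    show shiftSign (gridGraph (k ^ 2)) γh (sigB k γh) (emB k γh e) = 0
    have hs := (ec_spec e).1
    have hb1 := (ecA e).1.2; have hb2 := (ecA e).2.2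
    have hb3 := (ecB e).1.2; have hb4 := (ecB e).2.2
    simp only [gridAdj] at hs
    unfold emB
    by_cases h : (ecA e).1.1 = (ecB e).1.1
    · rw [dif_pos h]
      exact parityB_row k γh _ _ (Nat.mul_mod_left _ _) _ _
    · rw [dif_neg h]
      have hIv : min (ecA e).1.1 (ecB e).1.1 + 1 < k := by omega
      have hJv : (ecA e).2.1 < k := hb2
      obtain ⟨hx1, hx2, hy1, hy2⟩ := hval _ _ hIv hJv
      obtain ⟨hm1, hm2⟩ := mh_bounds k γh _ _ hx1 hx2
      exact parityB_model k γh _ _ hk hm1 hm2 hy1 hy2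
        (phiB_mh k γh _ _ hx1 hx2 (hodd _ _ hIv hJv)) _ _

/-- The key combinatorial core: the all-even `k × k` grid is a signed minor of the
`k² × k²` grid with an arbitrary signing. -/
lemma core_grid (k : ℕ) (γh : (gridGraph (k ^ 2)).E → ZMod 2) :
    IsSignedMinor (gridGraph k) (γ₀ (gridGraph k)) (gridGraph (k ^ 2)) γh := by
  rcases Nat.eq_zero_or_pos k with hk0 | hk
  · subst hk0
    refine ⟨{
      γ' := γh
      shift := ⟨fun _ => 0, ?_⟩
      bs := fun v => v.1.elim0
      em := fun e => (ecA e).1.elim0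
      bs_nonempty := ?_
      bs_disjoint := ?_
      bs_connected := ?_
      em_inj := ?_
      em_ends := ?_
      em_parity := ?_ }⟩
    · intro e u v _
      simp
    · intro v; exact v.1.elim0
    · intro u v _; exact u.1.elim0
    · intro v; exact v.1.elim0
    · intro e e' _; exact (ecA e).1.elim0
    · intro e; exact (ecA e).1.elim0
    · intro e; exact (ecA e).1.elim0
  · by_cases hA : ∃ i j : ℕ, i + 1 < k ∧ j < k ∧ ∀ x y : ℕ, i * k ≤ x →
        x + 1 < i * k + k → j * k ≤ y → y + 1 < j * k + k → cc k γh x y = cc k γh x (y + 1)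
    · obtain ⟨i, j, hi, hj, hwin⟩ := hA
      refine caseA k γh (i * k) (j * k) ?_ ?_ hwin
      · have h1 := le_sq1 k (i + 1) (by omega)
        have h2 : (i + 1) * k = i * k + k := by ring
        omega
      · have h1 := le_sq1 k (j + 1) (by omega)
        have h2 : (j + 1) * k = j * k + k := by ring
        omega
    · push_neg at hA
      refine caseB k γh hk ?_
      intro i j hi hj
      obtain ⟨x, y, h1, h2, h3, h4, h5⟩ := hA i j hi hj
      exact ⟨(x, y), h1, h2, h3, h4, h5⟩

/-- Forbidding the `k × k` grid as a minor forbids the even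
`k × k` grid as a signed minor; conversely forbidding the even `k × k` grid as a
signed minor forbids the `k² × k²` grid as a minor. -/
theorem statement_4 (k : ℕ) (G : MGraph) (γ : G.E → ZMod 2) :
    (¬ IsMinor (gridGraph k) G →
      ¬ IsSignedMinor (gridGraph k) (γ₀ (gridGraph k)) G γ) ∧
    (¬ IsSignedMinor (gridGraph k) (γ₀ (gridGraph k)) G γ →
      ¬ IsMinor (gridGraph (k ^ 2)) G) := by
  constructor
  · rintro h ⟨S⟩
    refine h ⟨{ bs := S.bs
                em := S.em
                bs_nonempty := S.bs_nonempty
                bs_disjoint := S.bs_disjoint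
                bs_connected := fun v a ha b hb => Relation.ReflTransGen.mono ?_ _ _ (S.bs_connected v a ha b hb)
                em_inj := S.em_inj
                em_ends := S.em_ends }⟩
    rintro x y ⟨hx, hy, e, _, he⟩
    exact ⟨hx, hy, e, he⟩
  · rintro hns ⟨M⟩
    obtain ⟨γh, himp⟩ := compose_minor_signed γ M (gridGraph k) (γ₀ (gridGraph k))
    exact hns (himp (core_grid k γh))

end TDMPaper
end

section
/- A graph G contains a graph H as an odd-minor if and only if the signed graph (G,γ₁) contains (H,γ₁) as a signed graph minor, where γ₁ labels every edge 1. -/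
namespace TDMPaper

open MGraph

lemma zmod2_key (a b : ZMod 2) : 1 + a + b = 0 ↔ a ≠ b := by revert a b; decide

lemma zmod2_key2 (a b : ZMod 2) : 1 + a + b = 1 ↔ a = b := by revert a b; decide

lemma zmod2_key3 (c : ZMod 2) : 1 + c + c = 1 := by revert c; decide

/-- `G` contains `H` as an odd-minor iff `(G,γ₁)` contains
`(H,γ₁)` as a signed graph minor. -/
theorem statement_5 (H G : MGraph) :
    IsOddMinor H G ↔ IsSignedMinor H (γ₁ H) G (γ₁ G) := by
  constructor
  · rintro ⟨M⟩
    refine ⟨⟨fun e => 1 + M.col (G.ep1 e) + M.col (G.ep2 e), ⟨M.col, ?_⟩, M.bs, M.em,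
      M.bs_nonempty, M.bs_disjoint, ?_, M.em_inj, M.em_ends, ?_⟩⟩
    · intro e u v h
      have h2 : s(G.ep1 e, G.ep2 e) = s(u, v) := by rw [← G.ends_ep, h]
      rw [Sym2.eq_iff] at h2
      show 1 + M.col (G.ep1 e) + M.col (G.ep2 e) = _
      rcases h2 with ⟨h1, h2⟩ | ⟨h1, h2⟩ <;> rw [h1, h2] <;> simp [γ₁] <;> ring
    · intro v a ha b hb
      refine Relation.ReflTransGen.mono ?_ a b (M.bs_connected v a ha b hb)
      rintro x y ⟨hx, hy, hne, e, he⟩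
      refine ⟨hx, hy, e, ?_, he⟩
      have h2 : s(G.ep1 e, G.ep2 e) = s(x, y) := by rw [← G.ends_ep, he]
      rw [Sym2.eq_iff] at h2
      show 1 + M.col (G.ep1 e) + M.col (G.ep2 e) = 0
      rcases h2 with ⟨h1, h2⟩ | ⟨h1, h2⟩ <;> rw [h1, h2]
      · exact (zmod2_key _ _).mpr hne
      · exact (zmod2_key _ _).mpr (Ne.symm hne)
    · intro eH
      have h := M.em_mono eH _ _ (G.ends_ep (M.em eH))
      show 1 + _ + _ = γ₁ H eH
      rw [h, zmod2_key3]
      rfl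
  · rintro ⟨M⟩
    obtain ⟨σ, hσ⟩ := M.shift
    have hγ' : ∀ e u v, G.ends e = s(u, v) → M.γ' e = 1 + σ u + σ v := by
      intro e u v h
      have := hσ e u v h
      simpa [γ₁] using this
    refine ⟨⟨M.bs, M.em, σ, M.bs_nonempty, M.bs_disjoint, ?_, M.em_inj, M.em_ends, ?_⟩⟩
    · intro v a ha b hb
      refine Relation.ReflTransGen.mono ?_ a b (M.bs_connected v a ha b hb)
      rintro x y ⟨hx, hy, e, he0, he⟩
      refine ⟨hx, hy, ?_, e, he⟩
      have h1 := hγ' e x y he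
      rw [he0] at h1
      exact (zmod2_key _ _).mp h1.symm
    · intro eH u v huv
      have h1 := hγ' (M.em eH) u v huv
      rw [M.em_parity eH] at h1
      exact (zmod2_key2 _ _).mp h1.symm

end TDMPaper
end
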